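/- arXiv:2307.16191 — 11 statements merged into one kernel-verified Lean document; each statement's English description precedes it below -/
import Mathlib

section
/- If (λ,ρ) and (λ',ρ') both belong to Λ* and λ − ρ = λ' − ρ' as elements of ℤ^n, then (λ,ρ) = (λ',ρ'). -/
/-- The resonance set `Λ` of the paper: pairs `(λ, ρ)` of multi-indices in `ℕ^n`
with `|λ+ρ|` odd, `|λ+ρ| ≤ 200N+1`, and `∑ ω_j (λ_j - ρ_j) > m`. -/
def resonanceSet (n : ℕ) (m : ℝ) (ω : Fin n → ℝ) (N : ℕ) :
    Set ((Fin n → ℕ) × (Fin n → ℕ)) :=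
  {p | Odd (∑ i, (p.1 i + p.2 i)) ∧ (∑ i, (p.1 i + p.2 i)) ≤ 200 * N + 1 ∧
    m < ∑ i, ω i * ((p.1 i : ℝ) - (p.2 i : ℝ))}

/-- The set `Λ*` of minimal elements of `Λ` with respect to the componentwise order. -/
def resonanceSetMin (n : ℕ) (m : ℝ) (ω : Fin n → ℝ) (N : ℕ) :
    Set ((Fin n → ℕ) × (Fin n → ℕ)) :=
  {p ∈ resonanceSet n m ω N | ∀ q ∈ resonanceSet n m ω N,
    (∀ i, q.1 i ≤ p.1 i) → (∀ i, q.2 i ≤ p.2 i) → q = p}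

/-- two elements of `Λ*` with the same difference `λ - ρ` coincide. -/
theorem resonanceSetMin_eq_of_sub_eq
    (n : ℕ) (hn : 0 < n) (m : ℝ) (hm : 0 < m) (N : ℕ) (hN : 1 ≤ N)
    (ω : Fin n → ℝ) (hωm : ∀ i, ω i < m) (hωpos : ∀ i, 0 < ω i)
    (hωanti : StrictAnti ω)
    (lam rho lam' rho' : Fin n → ℕ)
    (hmem : (lam, rho) ∈ resonanceSetMin n m ω N)
    (hmem' : (lam', rho') ∈ resonanceSetMin n m ω N)
    (hdiff : ∀ i, (lam i : ℤ) - (rho i : ℤ) = (lam' i : ℤ) - (rho' i : ℤ)) :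
    lam = lam' ∧ rho = rho' := by
  obtain ⟨⟨hodd, hle, hgt⟩, hmin⟩ := hmem
  obtain ⟨⟨hodd', hle', hgt'⟩, hmin'⟩ := hmem'
  have hodd2 : Odd (∑ i, (lam i + rho i)) := hodd
  have hle2 : (∑ i, (lam i + rho i)) ≤ 200 * N + 1 := hle
  set μ : Fin n → ℕ := fun i => min (lam i) (lam' i) with hμ
  set ν : Fin n → ℕ := fun i => min (rho i) (rho' i) with hν
  have hkey : ∀ i, (μ i : ℤ) - ν i = (lam i : ℤ) - rho i := by
    intro i
    have := hdiff i
    simp only [hμ, hν]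
    omega
  have hmemμ : (μ, ν) ∈ resonanceSet n m ω N := by
    refine ⟨?_, ?_, ?_⟩
    · show Odd (∑ i, (μ i + ν i))
      have h2 : (∑ i, (μ i + ν i)) % 2 = (∑ i, (lam i + rho i)) % 2 := by
        rw [Finset.sum_nat_mod, Finset.sum_nat_mod (f := fun i => lam i + rho i)]
        congr 1
        refine Finset.sum_congr rfl fun i _ => ?_
        have := hkey i
        omega
      rw [Nat.odd_iff] at hodd2 ⊢
      omega
    · show (∑ i, (μ i + ν i)) ≤ _
      refine le_trans (Finset.sum_le_sum fun i _ => ?_) hle2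
      simp only [hμ, hν]
      omega
    · show m < ∑ i, ω i * ((μ i : ℝ) - ν i)
      have heq : ∑ i, ω i * ((μ i : ℝ) - ν i) = ∑ i, ω i * ((lam i : ℝ) - rho i) := by
        refine Finset.sum_congr rfl fun i _ => ?_
        have h := hkey i
        have : ((μ i : ℝ) - ν i) = (lam i : ℝ) - rho i := by exact_mod_cast h
        rw [this]
      simpa [heq] using hgt
  have e1 := hmin (μ, ν) hmemμ (fun i => min_le_left _ _) (fun i => min_le_left _ _)
  have e2 := hmin' (μ, ν) hmemμ (fun i => min_le_right _ _) (fun i => min_le_right _ _)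
  rw [e1] at e2
  exact ⟨congrArg Prod.fst e2, congrArg Prod.snd e2⟩
end

section
/- For every (λ,ρ) ∈ Λ*, the total ∑_{j=1}^n ρ_j equals 0 or 1. -/
/-- One can decrease the total of a tuple by exactly one while staying below it. -/
lemma exists_sub_one (n : ℕ) (f : Fin n → ℕ) (h : 1 ≤ ∑ j, f j) :
    ∃ g : Fin n → ℕ, (∀ i, g i ≤ f i) ∧ ∑ j, g j + 1 = ∑ j, f j := by
  have hex : ∃ i, 1 ≤ f i := by
    by_contra hc
    push_neg at hc
    have : ∑ j, f j = 0 := Finset.sum_eq_zero (fun j _ => by have := hc j; omega)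
    omega
  obtain ⟨i, hi⟩ := hex
  refine ⟨Function.update f i (f i - 1), fun k => ?_, ?_⟩
  · rcases eq_or_ne k i with rfl | hk
    · simp
    · simp [Function.update_of_ne hk]
  · rw [Finset.sum_update_of_mem (Finset.mem_univ i)]
    have h2 : ∑ x ∈ Finset.univ.erase i, f x + f i = ∑ j, f j :=
      Finset.sum_erase_add _ _ (Finset.mem_univ i)
    have h3 : (Finset.univ : Finset (Fin n)) \ {i} = Finset.univ.erase i := by
      simp [Finset.erase_eq]
    rw [h3]
    omega

/-- One can decrease the total of a tuple by exactly two while staying below it. -/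
lemma exists_sub_two (n : ℕ) (f : Fin n → ℕ) (h : 2 ≤ ∑ j, f j) :
    ∃ g : Fin n → ℕ, (∀ i, g i ≤ f i) ∧ ∑ j, g j + 2 = ∑ j, f j := by
  obtain ⟨g, hg, hgs⟩ := exists_sub_one n f (by omega)
  obtain ⟨g', hg', hgs'⟩ := exists_sub_one n g (by omega)
  exact ⟨g', fun i => le_trans (hg' i) (hg i), by omega⟩

/-- for every `(λ,ρ) ∈ Λ*`, the total `∑ ρ_j` equals `0` or `1`. -/
theorem resonanceSetMin_sum_rho_le_one
    (n : ℕ) (hn : 0 < n) (m : ℝ) (hm : 0 < m) (N : ℕ) (hN : 1 ≤ N)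
    (ω : Fin n → ℝ) (hωm : ∀ i, ω i < m) (hωpos : ∀ i, 0 < ω i)
    (hωanti : StrictAnti ω)
    (lam rho : Fin n → ℕ)
    (hmem : (lam, rho) ∈ resonanceSetMin n m ω N) :
    (∑ j, rho j) = 0 ∨ (∑ j, rho j) = 1 := by
  by_contra h
  push_neg at h
  obtain ⟨h0, h1⟩ := h
  have h2 : 2 ≤ ∑ j, rho j := by omega
  obtain ⟨⟨hodd, hle, hm'⟩, hmin⟩ := hmem
  dsimp only at hodd hle hm'
  obtain ⟨rho', hle', hsum⟩ := exists_sub_two n rho h2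
  have hsplit : ∑ i, (lam i + rho' i) + 2 = ∑ i, (lam i + rho i) := by
    simp only [Finset.sum_add_distrib]
    omega
  have hmem' : (lam, rho') ∈ resonanceSet n m ω N := by
    refine ⟨?_, ?_, ?_⟩ <;> dsimp only
    · rw [Nat.odd_iff] at hodd ⊢
      omega
    · omega
    · refine lt_of_lt_of_le hm' (Finset.sum_le_sum fun i _ => ?_)
      have : ((rho' i : ℝ)) ≤ (rho i : ℝ) := Nat.cast_le.mpr (hle' i)
      have := (hωpos i).le
      nlinarith
  have heq := hmin (lam, rho') hmem' (fun i => le_refl _) hle'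
  have : rho' = rho := congrArg Prod.snd heq
  subst this
  omega
end

section
/- If (λ,ρ) ∈ Λ* and ∑_{j=1}^n ρ_j = 1, then there exists an index j with 2 ≤ j ≤ n such that ρ = e_j and λ_k = 0 for every k ≥ j. -/
/-- if `(λ,ρ) ∈ Λ*` and `∑ ρ_j = 1`, then `ρ = e_j` for some index `j ≥ 2`
(in 0-based `Fin n` indexing: `1 ≤ j`), and `λ_k = 0` for every `k ≥ j`. -/
theorem resonanceSetMin_rho_single
    (n : ℕ) (hn : 0 < n) (m : ℝ) (hm : 0 < m) (N : ℕ) (hN : 1 ≤ N)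
    (ω : Fin n → ℝ) (hωm : ∀ i, ω i < m) (hωpos : ∀ i, 0 < ω i)
    (hωanti : StrictAnti ω)
    (lam rho : Fin n → ℕ)
    (hmem : (lam, rho) ∈ resonanceSetMin n m ω N)
    (hsum : (∑ j, rho j) = 1) :
    ∃ j : Fin n, 1 ≤ (j : ℕ) ∧ (∀ i, rho i = if i = j then 1 else 0) ∧
      ∀ k, j ≤ k → lam k = 0 := by
  obtain ⟨⟨hodd, hbd, hgt⟩, hmin⟩ := hmem
  dsimp only at hodd hbd hgt
  -- find the unique j with rho j = 1
  have hjex : ∃ j, 0 < rho j := by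
    by_contra h
    push_neg at h
    have : ∑ j, rho j = 0 := Finset.sum_eq_zero fun i _ => Nat.le_zero.1 (h i)
    omega
  obtain ⟨j, hj⟩ := hjex
  have hsplit := Finset.add_sum_erase Finset.univ rho (Finset.mem_univ j)
  rw [hsum] at hsplit
  have hρj : rho j = 1 := by omega
  have hrest : ∑ i ∈ Finset.univ.erase j, rho i = 0 := by omega
  have hρ : ∀ i, rho i = if i = j then 1 else 0 := by
    intro i
    by_cases h : i = j
    · simp [h, hρj]
    · simp only [h, if_false]
      exact (Finset.sum_eq_zero_iff.1 hrest) i (Finset.mem_erase.2 ⟨h, Finset.mem_univ i⟩)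
  -- basic sum computations
  have hωρ : ∑ i, ω i * (rho i : ℝ) = ω j := by
    rw [Finset.sum_eq_single j]
    · simp [hρj]
    · intro i _ hi; simp [hρ i, hi]
    · intro h; exact absurd (Finset.mem_univ j) h
  have hgt' : m < (∑ i, ω i * (lam i : ℝ)) - ω j := by
    calc m < ∑ i, ω i * ((lam i : ℝ) - (rho i : ℝ)) := hgt
    _ = (∑ i, ω i * (lam i : ℝ)) - ∑ i, ω i * (rho i : ℝ) := by
        rw [← Finset.sum_sub_distrib]; congr 1; ext i; ring
    _ = _ := by rw [hωρ]
  have hS : ∑ i, (lam i + rho i) = (∑ i, lam i) + 1 := by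
    rw [Finset.sum_add_distrib, hsum]
  -- the key minimality argument
  have key : ∀ k, lam k ≠ 0 → ω k ≤ ω j → False := by
    intro k hk hωk
    have hlk : 1 ≤ lam k := Nat.one_le_iff_ne_zero.2 hk
    set q1 : Fin n → ℕ := fun i => lam i - (if i = k then 1 else 0) with hq1def
    have hlam_eq : ∀ i, lam i = q1 i + (if i = k then 1 else 0) := by
      intro i
      by_cases h : i = k <;> simp [hq1def, h] <;> omega
    have hsumq : (∑ i, q1 i) + 1 = ∑ i, lam i := by
      conv_rhs => rw [Finset.sum_congr rfl fun i _ => hlam_eq i]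
      rw [Finset.sum_add_distrib, Finset.sum_ite_eq' Finset.univ k (fun _ => 1)]
      simp
    have hcast : ∀ i, (q1 i : ℝ) = (lam i : ℝ) - (if i = k then 1 else 0) := by
      intro i
      have := hlam_eq i
      by_cases h : i = k <;> simp [h] at this ⊢ <;> rw [this] <;> push_cast <;> ring
    have hωq : ∑ i, ω i * ((q1 i : ℝ) - (0 : ℕ)) = (∑ i, ω i * (lam i : ℝ)) - ω k := by
      have : ∀ i, ω i * ((q1 i : ℝ) - (0 : ℕ)) =
          ω i * (lam i : ℝ) - ω i * (if i = k then 1 else 0) := by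
        intro i; rw [hcast]; push_cast; ring
      rw [Finset.sum_congr rfl fun i _ => this i, Finset.sum_sub_distrib]
      congr 1
      rw [Finset.sum_eq_single k]
      · simp
      · intro i _ hi; simp [hi]
      · intro h; exact absurd (Finset.mem_univ k) h
    have hmemq : ((q1, fun _ => 0) : (Fin n → ℕ) × (Fin n → ℕ)) ∈ resonanceSet n m ω N := by
      refine ⟨?_, ?_, ?_⟩
      · obtain ⟨t, ht⟩ := hodd
        have h1 : 1 ≤ ∑ i, lam i := le_trans hlk (Finset.single_le_sum (fun i _ => Nat.zero_le _) (Finset.mem_univ k))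
        refine ⟨t - 1, ?_⟩
        simp only [Nat.add_zero]
        omega
      · simp only [Nat.add_zero]
        omega
      · calc m < (∑ i, ω i * (lam i : ℝ)) - ω j := hgt'
          _ ≤ (∑ i, ω i * (lam i : ℝ)) - ω k := by linarith
          _ = _ := (hωq).symm
    have heq := hmin (q1, fun _ => 0) hmemq
      (fun i => Nat.sub_le _ _) (fun i => Nat.zero_le _)
    have : (0 : ℕ) = rho j := congrFun (congrArg Prod.snd heq) j
    omega
  -- lam is nonzero somewhere
  have hlnz : ∃ k, lam k ≠ 0 := by
    by_contra h
    push_neg at h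
    have : ∑ i, ω i * (lam i : ℝ) = 0 := Finset.sum_eq_zero fun i _ => by simp [h i]
    rw [this] at hgt'
    have := hωpos j
    linarith
  obtain ⟨k₀, hk₀⟩ := hlnz
  have hj1 : 1 ≤ (j : ℕ) := by
    by_contra h
    push_neg at h
    have hjk : j ≤ k₀ := by
      rw [Fin.le_def]; omega
    exact key k₀ hk₀ (hωanti.antitone hjk)
  exact ⟨j, hj1, hρ, fun k hjk => by
    by_contra h
    exact key k h (hωanti.antitone hjk)⟩
end

section
/- For every (λ,ρ) ∈ Λ* and every 1 ≤ j ≤ n one has the two-sided bound min(ω_n, m/(200N+1)) · ∑_{k ≤ j}(λ_k + ρ_k) ≤ ∑_{k ≤ j} ω_k (λ_k − ρ_k) ≤ ω_1 · ∑_{k ≤ j}(λ_k + ρ_k). -/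
/-- Key minimality consequence: we cannot subtract an "even, ω-decreasing" nonzero
pair `(a,b)` from a minimal element. -/
lemma resonance_key
    (n : ℕ) (m : ℝ) (N : ℕ) (ω : Fin n → ℝ)
    (lam rho : Fin n → ℕ)
    (hmem : (lam, rho) ∈ resonanceSetMin n m ω N)
    (a b : Fin n → ℕ)
    (ha : ∀ i, a i ≤ lam i) (hb : ∀ i, b i ≤ rho i)
    (heven : Even (∑ i, (a i + b i)))
    (hle : ∑ i, ω i * (a i : ℝ) ≤ ∑ i, ω i * (b i : ℝ))
    (hne : ∃ i, 0 < a i ∨ 0 < b i) : False := by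
  obtain ⟨⟨hodd', hbound', hsum⟩, hmin⟩ := hmem
  have hodd : Odd (∑ i, (lam i + rho i)) := hodd'
  have hbound : ∑ i, (lam i + rho i) ≤ 200 * N + 1 := hbound'
  have hsum_eq : ∑ i, ((lam i - a i) + (rho i - b i)) + ∑ i, (a i + b i)
      = ∑ i, (lam i + rho i) := by
    rw [← Finset.sum_add_distrib]
    exact Finset.sum_congr rfl fun i _ => by have := ha i; have := hb i; omega
  obtain ⟨t, ht⟩ := heven
  obtain ⟨s, hs⟩ := hodd
  have hqodd : Odd (∑ i, ((lam i - a i) + (rho i - b i))) := ⟨s - t, by omega⟩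
  have hqbound : ∑ i, ((lam i - a i) + (rho i - b i)) ≤ 200 * N + 1 := by omega
  have hreal : ∑ i, ω i * (((lam i - a i : ℕ) : ℝ) - ((rho i - b i : ℕ) : ℝ))
      = (∑ i, ω i * ((lam i : ℝ) - (rho i : ℝ)))
        - ((∑ i, ω i * (a i : ℝ)) - (∑ i, ω i * (b i : ℝ))) := by
    rw [← Finset.sum_sub_distrib, ← Finset.sum_sub_distrib]
    refine Finset.sum_congr rfl fun i _ => ?_
    rw [Nat.cast_sub (ha i), Nat.cast_sub (hb i)]
    ring
  have hqmem : (fun i => lam i - a i, fun i => rho i - b i) ∈ resonanceSet n m ω N := by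
    refine ⟨hqodd, hqbound, ?_⟩
    show m < ∑ i, ω i * (((lam i - a i : ℕ) : ℝ) - ((rho i - b i : ℕ) : ℝ))
    rw [hreal]
    linarith
  have heq := hmin _ hqmem (fun i => Nat.sub_le _ _) (fun i => Nat.sub_le _ _)
  obtain ⟨i, hi⟩ := hne
  have h1 := congrFun (congrArg Prod.fst heq) i
  have h2 := congrFun (congrArg Prod.snd heq) i
  simp only at h1 h2
  have := ha i; have := hb i
  omega

/-- for `(λ,ρ) ∈ Λ*` and any `j`,
`min(ω_n, m/(200N+1)) ⬝ ∑_{k ≤ j}(λ_k+ρ_k) ≤ ∑_{k ≤ j} ω_k (λ_k-ρ_k)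
  ≤ ω_1 ⬝ ∑_{k ≤ j}(λ_k+ρ_k)`. -/
theorem resonanceSetMin_partial_sum_comparable
    (n : ℕ) (hn : 0 < n) (m : ℝ) (hm : 0 < m) (N : ℕ) (hN : 1 ≤ N)
    (ω : Fin n → ℝ) (hωm : ∀ i, ω i < m) (hωpos : ∀ i, 0 < ω i)
    (hωanti : StrictAnti ω)
    (lam rho : Fin n → ℕ)
    (hmem : (lam, rho) ∈ resonanceSetMin n m ω N)
    (j : Fin n) :
    min (ω ⟨n - 1, by omega⟩) (m / (200 * (N : ℝ) + 1)) *
        (∑ k ∈ Finset.Iic j, ((lam k : ℝ) + (rho k : ℝ))) ≤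
      (∑ k ∈ Finset.Iic j, ω k * ((lam k : ℝ) - (rho k : ℝ))) ∧
    (∑ k ∈ Finset.Iic j, ω k * ((lam k : ℝ) - (rho k : ℝ))) ≤
      ω ⟨0, hn⟩ * (∑ k ∈ Finset.Iic j, ((lam k : ℝ) + (rho k : ℝ))) := by
  have hωlast : ∀ k : Fin n, ω ⟨n - 1, by omega⟩ ≤ ω k := by
    intro k
    exact hωanti.antitone (by simp [Fin.le_def]; omega)
  have hω0 : ∀ k : Fin n, ω k ≤ ω ⟨0, hn⟩ := by
    intro k
    exact hωanti.antitone (by simp [Fin.le_def])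
  constructor
  · -- lower bound
    by_cases hc : ∀ k ∈ Finset.Iic j, rho k = 0
    · rw [Finset.mul_sum]
      apply Finset.sum_le_sum
      intro k hk
      rw [hc k hk]
      have h1 : min (ω ⟨n - 1, by omega⟩) (m / (200 * (N : ℝ) + 1)) ≤ ω k :=
        le_trans (min_le_left _ _) (hωlast k)
      have h2 : (0 : ℝ) ≤ (lam k : ℝ) := Nat.cast_nonneg _
      simp only [Nat.cast_zero, add_zero, sub_zero]
      exact mul_le_mul_of_nonneg_right h1 h2
    · push_neg at hc
      obtain ⟨k0, hk0j, hk0⟩ := hc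
      have hk0pos : 1 ≤ rho k0 := Nat.one_le_iff_ne_zero.mpr hk0
      -- outside Iic j everything vanishes
      have hout : ∀ i : Fin n, i ∉ Finset.Iic j → lam i = 0 ∧ rho i = 0 := by
        intro i hi
        have hji : j < i := by simpa [Finset.mem_Iic] using hi
        have hk0i : k0 < i := lt_of_le_of_lt (Finset.mem_Iic.mp hk0j) hji
        constructor
        · by_contra hlam
          have hlam1 : 1 ≤ lam i := Nat.one_le_iff_ne_zero.mpr hlam
          refine resonance_key n m N ω lam rho hmem (Pi.single i 1) (Pi.single k0 1)
            ?_ ?_ ?_ ?_ ⟨i, Or.inl (by simp)⟩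
          · intro x
            rcases eq_or_ne x i with rfl | hx
            · simpa using hlam1
            · simp [Pi.single_apply, hx]
          · intro x
            rcases eq_or_ne x k0 with rfl | hx
            · simpa using hk0pos
            · simp [Pi.single_apply, hx]
          · rw [Finset.sum_add_distrib, Finset.sum_pi_single', Finset.sum_pi_single']
            simp only [Finset.mem_univ, if_true]
            exact ⟨1, rfl⟩
          · have e1 : ∑ x, ω x * ((Pi.single i 1 : Fin n → ℕ) x : ℝ) = ω i := by
              simp [Pi.single_apply, mul_ite, Finset.sum_ite_eq']
            have e2 : ∑ x, ω x * ((Pi.single k0 1 : Fin n → ℕ) x : ℝ) = ω k0 := by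
              simp [Pi.single_apply, mul_ite, Finset.sum_ite_eq']
            rw [e1, e2]
            exact le_of_lt (hωanti hk0i)
        · by_contra hrho
          have hrho1 : 1 ≤ rho i := Nat.one_le_iff_ne_zero.mpr hrho
          have hik0 : i ≠ k0 := fun h => absurd h (by exact fun h => (lt_irrefl i (h ▸ hk0i)).elim) 
          refine resonance_key n m N ω lam rho hmem 0 (Pi.single k0 1 + Pi.single i 1)
            (fun x => Nat.zero_le _) ?_ ?_ ?_ ⟨i, Or.inr (by simp [Pi.single_apply, hik0])⟩
          · intro x
            rcases eq_or_ne x k0 with rfl | hx1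
            · simp [Pi.single_apply, (Ne.symm hik0)]
              omega
            · rcases eq_or_ne x i with rfl | hx2
              · simp [Pi.single_apply, hx1]
                omega
              · simp [Pi.single_apply, hx1, hx2]
          · simp only [Pi.zero_apply, zero_add, Pi.add_apply]
            rw [Finset.sum_add_distrib, Finset.sum_pi_single', Finset.sum_pi_single']
            simp only [Finset.mem_univ, if_true]
            exact ⟨1, rfl⟩
          · have e2 : ∑ x, ω x * (((Pi.single k0 1 + Pi.single i 1 : Fin n → ℕ)) x : ℝ)
                = ω k0 + ω i := by
              simp only [Pi.add_apply, Nat.cast_add, mul_add]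
              rw [Finset.sum_add_distrib]
              have e1 : ∑ x, ω x * ((Pi.single k0 1 : Fin n → ℕ) x : ℝ) = ω k0 := by
                simp [Pi.single_apply, mul_ite, Finset.sum_ite_eq']
              have e3 : ∑ x, ω x * ((Pi.single i 1 : Fin n → ℕ) x : ℝ) = ω i := by
                simp [Pi.single_apply, mul_ite, Finset.sum_ite_eq']
              rw [e1, e3]
            rw [e2]
            have := hωpos k0; have := hωpos i
            simp only [Pi.zero_apply, Nat.cast_zero, mul_zero, Finset.sum_const_zero]
            linarith
      -- partial sums equal full sums
      have hS : ∑ k ∈ Finset.Iic j, ((lam k : ℝ) + (rho k : ℝ))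
          = ∑ k, ((lam k : ℝ) + (rho k : ℝ)) := by
        refine Finset.sum_subset (Finset.subset_univ _) fun x _ hx => ?_
        rw [(hout x hx).1, (hout x hx).2]; simp
      have hT : ∑ k ∈ Finset.Iic j, ω k * ((lam k : ℝ) - (rho k : ℝ))
          = ∑ k, ω k * ((lam k : ℝ) - (rho k : ℝ)) := by
        refine Finset.sum_subset (Finset.subset_univ _) fun x _ hx => ?_
        rw [(hout x hx).1, (hout x hx).2]; simp
      obtain ⟨⟨hodd, hbound, hsum⟩, hmin⟩ := hmem
      have hSbound : ∑ k, ((lam k : ℝ) + (rho k : ℝ)) ≤ 200 * (N : ℝ) + 1 := by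
        calc ∑ k, ((lam k : ℝ) + (rho k : ℝ)) = ((∑ k, (lam k + rho k) : ℕ) : ℝ) := by
              norm_cast
          _ ≤ 200 * (N : ℝ) + 1 := by exact_mod_cast hbound
      have hSnn : (0 : ℝ) ≤ ∑ k, ((lam k : ℝ) + (rho k : ℝ)) :=
        Finset.sum_nonneg fun k _ => by positivity
      have hdpos : (0 : ℝ) < 200 * (N : ℝ) + 1 := by positivity
      rw [hS, hT]
      calc min (ω ⟨n - 1, by omega⟩) (m / (200 * (N : ℝ) + 1)) *
              ∑ k, ((lam k : ℝ) + (rho k : ℝ))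
          ≤ (m / (200 * (N : ℝ) + 1)) * ∑ k, ((lam k : ℝ) + (rho k : ℝ)) :=
            mul_le_mul_of_nonneg_right (min_le_right _ _) hSnn
        _ ≤ (m / (200 * (N : ℝ) + 1)) * (200 * (N : ℝ) + 1) := by
            apply mul_le_mul_of_nonneg_left hSbound
            positivity
        _ = m := div_mul_cancel₀ m (ne_of_gt hdpos)
        _ ≤ ∑ k, ω k * ((lam k : ℝ) - (rho k : ℝ)) := le_of_lt hsum
  · -- upper bound
    rw [Finset.mul_sum]
    apply Finset.sum_le_sum
    intro k _
    have h1 : ω k ≤ ω ⟨0, hn⟩ := hω0 k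
    have h2 : (0 : ℝ) ≤ (lam k : ℝ) := Nat.cast_nonneg _
    have h3 : (0 : ℝ) ≤ (rho k : ℝ) := Nat.cast_nonneg _
    nlinarith [hωpos k]
end

section
/- Let (λ,ρ) ∈ Λ and let F : {1,…,n} → {1,…,n} be any map with F(j) ≤ j for all j. Define θ ∈ ℕ^n by θ_i = ∑_{j : F(j) = i} (λ_j + ρ_j). Then (θ, 0) ∈ Λ. Moreover, for each 1 ≤ j ≤ n, if ∑_{k ≤ j}(λ_k + ρ_k) > 0 then ∑_{k ≤ j} θ_k > 0. -/
/-- rearrangement along a map `F` with `F(j) ≤ j`: for `(λ,ρ) ∈ Λ`,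
the multi-index `θ_i = ∑_{j : F j = i} (λ_j + ρ_j)` satisfies `(θ,0) ∈ Λ`, and
positivity of the partial sums `∑_{k ≤ j}(λ_k+ρ_k)` is inherited by `θ`. -/
theorem resonanceSet_rearrangement
    (n : ℕ) (hn : 0 < n) (m : ℝ) (hm : 0 < m) (N : ℕ) (hN : 1 ≤ N)
    (ω : Fin n → ℝ) (hωm : ∀ i, ω i < m) (hωpos : ∀ i, 0 < ω i)
    (hωanti : StrictAnti ω)
    (lam rho : Fin n → ℕ)
    (hmem : (lam, rho) ∈ resonanceSet n m ω N)
    (F : Fin n → Fin n) (hF : ∀ j, F j ≤ j) :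
    ((fun i => ∑ j ∈ Finset.univ.filter (fun j => F j = i), (lam j + rho j)),
      (fun _ => 0)) ∈ resonanceSet n m ω N ∧
    ∀ j : Fin n, 0 < ∑ k ∈ Finset.Iic j, (lam k + rho k) →
      0 < ∑ k ∈ Finset.Iic j,
        ∑ j' ∈ Finset.univ.filter (fun j' => F j' = k), (lam j' + rho j') := by
  obtain ⟨hodd, hle, hgt⟩ := hmem
  have hfib : ∀ (f : Fin n → ℕ),
      (∑ i, ∑ j ∈ Finset.univ.filter (fun j => F j = i), f j) = ∑ j, f j := by
    intro f
    exact Finset.sum_fiberwise Finset.univ F f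
  constructor
  · refine ⟨?_, ?_, ?_⟩
    · simpa [hfib] using hodd
    · simpa [hfib] using hle
    · have key : (∑ i, ω i * ((((∑ j ∈ Finset.univ.filter (fun j => F j = i),
            (lam j + rho j)) : ℕ) : ℝ) - ((0 : ℕ) : ℝ)))
          = ∑ j, ω (F j) * ((lam j + rho j : ℕ) : ℝ) := by
        rw [← Finset.sum_fiberwise Finset.univ F
          (fun j => ω (F j) * ((lam j + rho j : ℕ) : ℝ))]
        refine Finset.sum_congr rfl fun i _ => ?_
        simp only [Nat.cast_zero, sub_zero, Nat.cast_sum, Finset.mul_sum]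
        refine Finset.sum_congr rfl fun j hj => ?_
        simp only [Finset.mem_filter] at hj
        rw [hj.2]
      have hterm : ∀ j : Fin n, ω j * ((lam j : ℝ) - (rho j : ℝ))
          ≤ ω (F j) * ((lam j + rho j : ℕ) : ℝ) := by
        intro j
        have h1 : ω j * ((lam j : ℝ) - (rho j : ℝ))
            ≤ ω j * ((lam j + rho j : ℕ) : ℝ) := by
          apply mul_le_mul_of_nonneg_left _ (hωpos j).le
          push_cast
          linarith [Nat.cast_nonneg (α := ℝ) (rho j)]
        have h2 : ω j * ((lam j + rho j : ℕ) : ℝ)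
            ≤ ω (F j) * ((lam j + rho j : ℕ) : ℝ) := by
          apply mul_le_mul_of_nonneg_right _ (Nat.cast_nonneg _)
          exact hωanti.antitone (hF j)
        linarith
      calc m < ∑ i, ω i * ((lam i : ℝ) - (rho i : ℝ)) := hgt
        _ ≤ ∑ j, ω (F j) * ((lam j + rho j : ℕ) : ℝ) :=
          Finset.sum_le_sum fun j _ => hterm j
        _ = _ := key.symm
  · intro j hj
    obtain ⟨k, hk, hkpos⟩ : ∃ k ∈ Finset.Iic j, 0 < lam k + rho k := by
      by_contra h
      push_neg at h
      have : ∑ k ∈ Finset.Iic j, (lam k + rho k) = 0 :=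
        Finset.sum_eq_zero fun k hk => Nat.le_zero.mp (h k hk)
      omega
    have hFk : F k ∈ Finset.Iic j := by
      simp only [Finset.mem_Iic] at hk ⊢
      exact le_trans (hF k) hk
    refine lt_of_lt_of_le ?_ (Finset.single_le_sum (f := fun i =>
      ∑ j' ∈ Finset.univ.filter (fun j' => F j' = i), (lam j' + rho j'))
      (fun _ _ => Nat.zero_le _) hFk)
    exact lt_of_lt_of_le hkpos (Finset.single_le_sum (f := fun j' => lam j' + rho j')
      (fun _ _ => Nat.zero_le _) (Finset.mem_filter.mpr ⟨Finset.mem_univ _, rfl⟩))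
end

section
/- There exist constants c, C > 0, depending only on n, ω_1, ω_n and N, such that for every vector X ∈ ℝ^n with nonnegative entries, setting X̃_j = ∑_{k ≤ j} ω_k X_k for 1 ≤ j ≤ n, one has for every 1 ≤ j ≤ n: c · ∑_{(λ,ρ)∈Λ} ∑_{k ≤ j}(λ_k+ρ_k) X̃^{λ+ρ} ≤ ∑_{(λ,ρ)∈Λ} ∑_{k ≤ j}(λ_k+ρ_k) X^{λ+ρ} ≤ C · ∑_{(λ,ρ)∈Λ} ∑_{k ≤ j}(λ_k+ρ_k) X̃^{λ+ρ}. -/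
open Classical

/-- The resonance set `Λ` of the paper, as a `Finset`: pairs `(λ, ρ)` of multi-indices
in `ℕ^n` with `|λ+ρ|` odd, `|λ+ρ| ≤ 200N+1`, and `∑ ω_j (λ_j - ρ_j) > m`.
(The ambient box `range (200N+2)` is no restriction since `|λ+ρ| ≤ 200N+1`.) -/
noncomputable def resonanceFinset (n : ℕ) (m : ℝ) (ω : Fin n → ℝ) (N : ℕ) :
    Finset ((Fin n → ℕ) × (Fin n → ℕ)) :=
  ((Fintype.piFinset fun _ : Fin n => Finset.range (200 * N + 2)) ×ˢ
      (Fintype.piFinset fun _ : Fin n => Finset.range (200 * N + 2))).filter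
    fun p => Odd (∑ i, (p.1 i + p.2 i)) ∧ (∑ i, (p.1 i + p.2 i)) ≤ 200 * N + 1 ∧
      m < ∑ i, ω i * ((p.1 i : ℝ) - (p.2 i : ℝ))

/-- with `X̃_j = ∑_{k ≤ j} ω_k X_k`, the weighted sums
`∑_{(λ,ρ)∈Λ} ∑_{k ≤ j}(λ_k+ρ_k) X^{λ+ρ}` and the same expression with `X̃` in place
of `X` are comparable, uniformly in the nonnegative vector `X`. -/
theorem sum_resonance_X_tildeX_comparable
    (n : ℕ) (hn : 0 < n) (m : ℝ) (hm : 0 < m) (N : ℕ) (hN : 1 ≤ N)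
    (ω : Fin n → ℝ) (hωm : ∀ i, ω i < m) (hωpos : ∀ i, 0 < ω i)
    (hωanti : StrictAnti ω) :
    ∃ c > (0 : ℝ), ∃ C > (0 : ℝ), ∀ X : Fin n → ℝ, (∀ k, 0 ≤ X k) → ∀ j : Fin n,
      (c * ∑ p ∈ resonanceFinset n m ω N,
          (∑ k ∈ Finset.Iic j, ((p.1 k : ℝ) + (p.2 k : ℝ))) *
            ∏ i, (∑ k ∈ Finset.Iic i, ω k * X k) ^ (p.1 i + p.2 i) ≤
        ∑ p ∈ resonanceFinset n m ω N,
          (∑ k ∈ Finset.Iic j, ((p.1 k : ℝ) + (p.2 k : ℝ))) *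
            ∏ i, X i ^ (p.1 i + p.2 i)) ∧
      (∑ p ∈ resonanceFinset n m ω N,
          (∑ k ∈ Finset.Iic j, ((p.1 k : ℝ) + (p.2 k : ℝ))) *
            ∏ i, X i ^ (p.1 i + p.2 i) ≤
        C * ∑ p ∈ resonanceFinset n m ω N,
          (∑ k ∈ Finset.Iic j, ((p.1 k : ℝ) + (p.2 k : ℝ))) *
            ∏ i, (∑ k ∈ Finset.Iic i, ω k * X k) ^ (p.1 i + p.2 i)) := by
  classical
  set Λ := resonanceFinset n m ω N with hΛdef
  have hmem : ∀ p ∈ Λ, Odd (∑ i, (p.1 i + p.2 i)) ∧ (∑ i, (p.1 i + p.2 i)) ≤ 200 * N + 1 ∧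
      m < ∑ i, ω i * ((p.1 i : ℝ) - (p.2 i : ℝ)) := by
    intro p hp
    rw [hΛdef, resonanceFinset, Finset.mem_filter] at hp
    exact hp.2
  have hmem' : ∀ μ : Fin n → ℕ, Odd (∑ i, μ i) → (∑ i, μ i) ≤ 200 * N + 1 →
      m < ∑ i, ω i * (μ i : ℝ) →
      ((μ, fun _ => 0) : (Fin n → ℕ) × (Fin n → ℕ)) ∈ Λ := by
    intro μ h1 h2 h3
    rw [hΛdef, resonanceFinset, Finset.mem_filter]
    refine ⟨Finset.mem_product.2 ⟨?_, ?_⟩, ?_, ?_, ?_⟩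
    · rw [Fintype.mem_piFinset]
      intro i
      rw [Finset.mem_range]
      show μ i < 200 * N + 2
      have : μ i ≤ ∑ i', μ i' :=
        Finset.single_le_sum (fun _ _ => Nat.zero_le _) (Finset.mem_univ i)
      omega
    · rw [Fintype.mem_piFinset]; intro i; simp
    · simpa using h1
    · simpa using h2
    · simpa using h3
  set i0 : Fin n := ⟨0, hn⟩ with hi0
  set il : Fin n := ⟨n - 1, Nat.sub_lt hn one_pos⟩ with hil
  set W : ℝ := (n : ℝ) * ω i0 with hW
  set A : ℝ := (max 1 W) ^ (200 * N + 1) with hA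
  have hA1 : (1 : ℝ) ≤ A := one_le_pow₀ (le_max_left _ _)
  have hA0 : (0 : ℝ) < A := lt_of_lt_of_le one_pos hA1
  set B : ℝ := (ω il)⁻¹ with hB
  set CC : ℝ := (max 1 B) ^ (200 * N + 1) with hCC
  have hCC1 : (1 : ℝ) ≤ CC := one_le_pow₀ (le_max_left _ _)
  have hden : (0 : ℝ) < (Λ.card : ℝ) * A + 1 := by positivity
  refine ⟨((Λ.card : ℝ) * A + 1)⁻¹, inv_pos.2 hden, CC, lt_of_lt_of_le one_pos hCC1, ?_⟩
  intro X hX j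
  set tX : Fin n → ℝ := fun i => ∑ k ∈ Finset.Iic i, ω k * X k with htXdef
  have htX0 : ∀ i, 0 ≤ tX i := fun i =>
    Finset.sum_nonneg fun k _ => mul_nonneg (hωpos k).le (hX k)
  -- generic monomial comparison
  have key : ∀ (u v : Fin n → ℝ) (K : ℝ) (dd : Fin n → ℕ), (∀ i, 0 ≤ u i) → (∀ i, 0 ≤ v i) →
      (∀ i, u i ≤ K * v i) → (∑ i, dd i) ≤ 200 * N + 1 →
      ∏ i, u i ^ dd i ≤ (max 1 K) ^ (200 * N + 1) * ∏ i, v i ^ dd i := by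
    intro u v K dd hu hv huv hdd
    have h1 : ∏ i, u i ^ dd i ≤ ∏ i, (max 1 K * v i) ^ dd i := by
      refine Finset.prod_le_prod (fun i _ => pow_nonneg (hu i) _) (fun i _ => ?_)
      refine pow_le_pow_left₀ (hu i) (le_trans (huv i) ?_) _
      exact mul_le_mul_of_nonneg_right (le_max_right _ _) (hv i)
    have h2 : ∏ i, (max 1 K * v i) ^ dd i = (max 1 K) ^ (∑ i, dd i) * ∏ i, v i ^ dd i := by
      simp_rw [mul_pow]
      rw [Finset.prod_mul_distrib, Finset.prod_pow_eq_pow_sum]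
    have h3 : (max 1 K) ^ (∑ i, dd i) ≤ (max 1 K) ^ (200 * N + 1) :=
      pow_le_pow_right₀ (le_max_left _ _) hdd
    calc ∏ i, u i ^ dd i ≤ (max 1 K) ^ (∑ i, dd i) * ∏ i, v i ^ dd i := by rw [← h2]; exact h1
      _ ≤ (max 1 K) ^ (200 * N + 1) * ∏ i, v i ^ dd i :=
        mul_le_mul_of_nonneg_right h3 (Finset.prod_nonneg fun i _ => pow_nonneg (hv i) _)
  have hwnonneg : ∀ p : (Fin n → ℕ) × (Fin n → ℕ),
      0 ≤ ∑ k ∈ Finset.Iic j, ((p.1 k : ℝ) + (p.2 k : ℝ)) :=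
    fun p => Finset.sum_nonneg fun k _ => by positivity
  have hSXnonneg : 0 ≤ ∑ p ∈ Λ, (∑ k ∈ Finset.Iic j, ((p.1 k : ℝ) + (p.2 k : ℝ))) *
      ∏ i, X i ^ (p.1 i + p.2 i) := by
    refine Finset.sum_nonneg fun p _ => mul_nonneg (hwnonneg p) ?_
    exact Finset.prod_nonneg fun i _ => pow_nonneg (hX i) _
  constructor
  · -- lower bound : c * S(tX) ≤ S(X)
    have hlb : ∀ p ∈ Λ, (∑ k ∈ Finset.Iic j, ((p.1 k : ℝ) + (p.2 k : ℝ))) *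
        ∏ i, tX i ^ (p.1 i + p.2 i) ≤
        A * ∑ q ∈ Λ, (∑ k ∈ Finset.Iic j, ((q.1 k : ℝ) + (q.2 k : ℝ))) *
          ∏ i, X i ^ (q.1 i + q.2 i) := by
      intro p hp
      obtain ⟨hodd, hsum, hres⟩ := hmem p hp
      have hmax : ∀ i : Fin n, ∃ l ∈ Finset.Iic i, ∀ l' ∈ Finset.Iic i, X l' ≤ X l :=
        fun i => Finset.exists_max_image _ X ⟨i, Finset.mem_Iic.2 le_rfl⟩
      choose k hk1 hk2 using hmax
      have hki : ∀ i, k i ≤ i := fun i => Finset.mem_Iic.1 (hk1 i)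
      have htXW : ∀ i, tX i ≤ W * X (k i) := by
        intro i
        have hstep : ∀ l ∈ Finset.Iic i, ω l * X l ≤ ω i0 * X (k i) := by
          intro l hl
          exact mul_le_mul (hωanti.antitone (Fin.le_def.mpr (Nat.zero_le _)))
            (hk2 i l hl) (hX l) (hωpos _).le
        calc tX i ≤ ∑ _l ∈ Finset.Iic i, ω i0 * X (k i) := Finset.sum_le_sum hstep
          _ = ((Finset.Iic i).card : ℝ) * (ω i0 * X (k i)) := by
              rw [Finset.sum_const, nsmul_eq_mul]
          _ ≤ (n : ℝ) * (ω i0 * X (k i)) := by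
              refine mul_le_mul_of_nonneg_right ?_ (mul_nonneg (hωpos _).le (hX _))
              exact_mod_cast (Finset.card_le_univ _).trans (le_of_eq (Finset.card_fin n))
          _ = W * X (k i) := by rw [hW, mul_assoc]
      set dd : Fin n → ℕ := fun i => p.1 i + p.2 i with hdd
      set μ : Fin n → ℕ := fun l => ∑ i ∈ Finset.univ.filter (fun i => k i = l), dd i with hμ
      have hμsum : ∑ l, μ l = ∑ i, dd i := Finset.sum_fiberwise Finset.univ k dd
      have hprodμ : ∏ i, X (k i) ^ dd i = ∏ l, X l ^ μ l := by
        rw [← Finset.prod_fiberwise Finset.univ k (fun i => X (k i) ^ dd i)]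
        refine Finset.prod_congr rfl fun l _ => ?_
        have : ∏ i ∈ Finset.univ.filter (fun i => k i = l), X (k i) ^ dd i
            = ∏ i ∈ Finset.univ.filter (fun i => k i = l), X l ^ dd i :=
          Finset.prod_congr rfl fun i hi => by rw [(Finset.mem_filter.1 hi).2]
        rw [this, Finset.prod_pow_eq_pow_sum]
      have hwμ : (∑ k' ∈ Finset.Iic j, dd k') ≤ ∑ l ∈ Finset.Iic j, μ l := by
        have heq : ∑ l ∈ Finset.Iic j, μ l
            = ∑ i ∈ Finset.univ.filter (fun i => k i ∈ Finset.Iic j), dd i :=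
          Finset.sum_fiberwise_eq_sum_filter Finset.univ (Finset.Iic j) k dd
        rw [heq]
        refine Finset.sum_le_sum_of_subset ?_
        intro i hi
        simp only [Finset.mem_filter, Finset.mem_univ, true_and, Finset.mem_Iic] at hi ⊢
        exact (hki i).trans hi
      have hresμ : m < ∑ l, ω l * (μ l : ℝ) := by
        have h1 : ∑ l, ω l * (μ l : ℝ) = ∑ i, ω (k i) * (dd i : ℝ) := by
          rw [← Finset.sum_fiberwise Finset.univ k (fun i => ω (k i) * (dd i : ℝ))]
          refine Finset.sum_congr rfl fun l _ => ?_
          rw [hμ, Nat.cast_sum, Finset.mul_sum]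
          exact Finset.sum_congr rfl fun i hi => by rw [(Finset.mem_filter.1 hi).2]
        rw [h1]
        have h2 : ∑ i, ω i * ((p.1 i : ℝ) - (p.2 i : ℝ)) ≤ ∑ i, ω (k i) * (dd i : ℝ) := by
          refine Finset.sum_le_sum fun i _ => ?_
          have hω' : ω i ≤ ω (k i) := hωanti.antitone (hki i)
          have hd : ((p.1 i : ℝ) - (p.2 i : ℝ)) ≤ (dd i : ℝ) := by
            rw [hdd]; push_cast
            have := Nat.cast_nonneg (α := ℝ) (p.2 i)
            linarith
          rcases le_or_gt ((p.1 i : ℝ) - (p.2 i : ℝ)) 0 with hle | hlt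
          · have e1 : ω i * ((p.1 i : ℝ) - (p.2 i : ℝ)) ≤ 0 :=
              mul_nonpos_of_nonneg_of_nonpos (hωpos i).le hle
            have e2 : 0 ≤ ω (k i) * (dd i : ℝ) :=
              mul_nonneg (hωpos _).le (Nat.cast_nonneg _)
            linarith
          · exact mul_le_mul hω' hd hlt.le (hωpos _).le
        linarith
      have hμΛ : ((μ, fun _ => 0) : (Fin n → ℕ) × (Fin n → ℕ)) ∈ Λ :=
        hmem' μ (hμsum ▸ hodd) (hμsum ▸ hsum) hresμ
      have hprodbound : ∏ i, tX i ^ dd i ≤ A * ∏ l, X l ^ μ l := by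
        rw [← hprodμ, hA]
        exact key tX (fun i => X (k i)) W dd htX0 (fun i => hX (k i)) htXW hsum
      have hwcast : (∑ k' ∈ Finset.Iic j, ((p.1 k' : ℝ) + (p.2 k' : ℝ)))
          ≤ ∑ l ∈ Finset.Iic j, (μ l : ℝ) := by
        have : ((∑ k' ∈ Finset.Iic j, dd k' : ℕ) : ℝ) ≤ ((∑ l ∈ Finset.Iic j, μ l : ℕ) : ℝ) :=
          Nat.cast_le.2 hwμ
        simp only [hdd] at this
        push_cast at this
        exact this
      have hsingle : (∑ l ∈ Finset.Iic j, (μ l : ℝ)) * ∏ l, X l ^ μ l ≤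
          ∑ q ∈ Λ, (∑ k' ∈ Finset.Iic j, ((q.1 k' : ℝ) + (q.2 k' : ℝ))) *
            ∏ i, X i ^ (q.1 i + q.2 i) := by
        have := Finset.single_le_sum (f := fun q : (Fin n → ℕ) × (Fin n → ℕ) =>
            (∑ k' ∈ Finset.Iic j, ((q.1 k' : ℝ) + (q.2 k' : ℝ))) * ∏ i, X i ^ (q.1 i + q.2 i))
          (fun q _ => mul_nonneg (hwnonneg q)
            (Finset.prod_nonneg fun i _ => pow_nonneg (hX i) _)) hμΛ
        simpa using this
      calc (∑ k' ∈ Finset.Iic j, ((p.1 k' : ℝ) + (p.2 k' : ℝ))) * ∏ i, tX i ^ dd i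
          ≤ (∑ l ∈ Finset.Iic j, (μ l : ℝ)) * (A * ∏ l, X l ^ μ l) := by
            refine mul_le_mul hwcast hprodbound ?_ ?_
            · exact Finset.prod_nonneg fun i _ => pow_nonneg (htX0 i) _
            · exact Finset.sum_nonneg fun l _ => Nat.cast_nonneg _
        _ = A * ((∑ l ∈ Finset.Iic j, (μ l : ℝ)) * ∏ l, X l ^ μ l) := by ring
        _ ≤ A * ∑ q ∈ Λ, (∑ k' ∈ Finset.Iic j, ((q.1 k' : ℝ) + (q.2 k' : ℝ))) *
              ∏ i, X i ^ (q.1 i + q.2 i) := mul_le_mul_of_nonneg_left hsingle hA0.le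
    have hsum' : ∑ p ∈ Λ, (∑ k ∈ Finset.Iic j, ((p.1 k : ℝ) + (p.2 k : ℝ))) *
        ∏ i, tX i ^ (p.1 i + p.2 i) ≤
        (Λ.card : ℝ) * (A * ∑ q ∈ Λ, (∑ k ∈ Finset.Iic j, ((q.1 k : ℝ) + (q.2 k : ℝ))) *
          ∏ i, X i ^ (q.1 i + q.2 i)) := by
      calc _ ≤ ∑ _p ∈ Λ, A * ∑ q ∈ Λ, (∑ k ∈ Finset.Iic j, ((q.1 k : ℝ) + (q.2 k : ℝ))) *
            ∏ i, X i ^ (q.1 i + q.2 i) := Finset.sum_le_sum hlb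
        _ = _ := by rw [Finset.sum_const, nsmul_eq_mul]
    have hc1 : ((Λ.card : ℝ) * A + 1)⁻¹ * ((Λ.card : ℝ) * A) ≤ 1 := by
      rw [inv_mul_le_iff₀ hden]
      nlinarith [hA0, Nat.cast_nonneg (α := ℝ) Λ.card]
    have hcpos : (0:ℝ) ≤ ((Λ.card : ℝ) * A + 1)⁻¹ := (inv_pos.2 hden).le
    calc ((Λ.card : ℝ) * A + 1)⁻¹ * ∑ p ∈ Λ, (∑ k ∈ Finset.Iic j, ((p.1 k : ℝ) + (p.2 k : ℝ))) *
          ∏ i, tX i ^ (p.1 i + p.2 i)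
        ≤ ((Λ.card : ℝ) * A + 1)⁻¹ * ((Λ.card : ℝ) * A * ∑ q ∈ Λ,
            (∑ k ∈ Finset.Iic j, ((q.1 k : ℝ) + (q.2 k : ℝ))) * ∏ i, X i ^ (q.1 i + q.2 i)) := by
          refine mul_le_mul_of_nonneg_left ?_ hcpos
          rw [mul_assoc]; exact hsum'
      _ = (((Λ.card : ℝ) * A + 1)⁻¹ * ((Λ.card : ℝ) * A)) * ∑ q ∈ Λ,
            (∑ k ∈ Finset.Iic j, ((q.1 k : ℝ) + (q.2 k : ℝ))) * ∏ i, X i ^ (q.1 i + q.2 i) := by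
          ring
      _ ≤ 1 * ∑ q ∈ Λ, (∑ k ∈ Finset.Iic j, ((q.1 k : ℝ) + (q.2 k : ℝ))) *
            ∏ i, X i ^ (q.1 i + q.2 i) := mul_le_mul_of_nonneg_right hc1 hSXnonneg
      _ = _ := one_mul _
  · -- upper bound : S(X) ≤ CC * S(tX)
    have hXtX : ∀ i, X i ≤ B * tX i := by
      intro i
      have hωl : ω il ≤ ω i :=
        hωanti.antitone (Fin.le_def.mpr (Nat.le_pred_of_lt i.isLt))
      have h1 : ω il * X i ≤ ω i * X i := mul_le_mul_of_nonneg_right hωl (hX i)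
      have h2 : ω i * X i ≤ tX i :=
        Finset.single_le_sum (f := fun k => ω k * X k)
          (fun k _ => mul_nonneg (hωpos k).le (hX k)) (Finset.mem_Iic.2 le_rfl)
      have hpos := hωpos il
      rw [hB, inv_mul_eq_div, le_div_iff₀ hpos]
      calc X i * ω il = ω il * X i := mul_comm _ _
        _ ≤ tX i := h1.trans h2
    have hub : ∀ p ∈ Λ, (∑ k ∈ Finset.Iic j, ((p.1 k : ℝ) + (p.2 k : ℝ))) *
        ∏ i, X i ^ (p.1 i + p.2 i) ≤
        CC * ((∑ k ∈ Finset.Iic j, ((p.1 k : ℝ) + (p.2 k : ℝ))) *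
          ∏ i, tX i ^ (p.1 i + p.2 i)) := by
      intro p hp
      obtain ⟨_, hsum, _⟩ := hmem p hp
      have hkey := key X tX B (fun i => p.1 i + p.2 i) hX htX0 hXtX hsum
      rw [← hCC] at hkey
      calc (∑ k ∈ Finset.Iic j, ((p.1 k : ℝ) + (p.2 k : ℝ))) * ∏ i, X i ^ (p.1 i + p.2 i)
          ≤ (∑ k ∈ Finset.Iic j, ((p.1 k : ℝ) + (p.2 k : ℝ))) *
            (CC * ∏ i, tX i ^ (p.1 i + p.2 i)) :=
            mul_le_mul_of_nonneg_left hkey (hwnonneg p)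
        _ = CC * ((∑ k ∈ Finset.Iic j, ((p.1 k : ℝ) + (p.2 k : ℝ))) *
            ∏ i, tX i ^ (p.1 i + p.2 i)) := by ring
    calc ∑ p ∈ Λ, (∑ k ∈ Finset.Iic j, ((p.1 k : ℝ) + (p.2 k : ℝ))) *
          ∏ i, X i ^ (p.1 i + p.2 i)
        ≤ ∑ p ∈ Λ, CC * ((∑ k ∈ Finset.Iic j, ((p.1 k : ℝ) + (p.2 k : ℝ))) *
            ∏ i, tX i ^ (p.1 i + p.2 i)) := Finset.sum_le_sum hub
      _ = CC * ∑ p ∈ Λ, (∑ k ∈ Finset.Iic j, ((p.1 k : ℝ) + (p.2 k : ℝ))) *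
            ∏ i, tX i ^ (p.1 i + p.2 i) := by rw [Finset.mul_sum]
end

section
/- There exists a constant C > 0, depending only on n, ω_n and N, such that for every vector X ∈ ℝ^n with 0 ≤ X_k ≤ 1 for all k, setting X̃_j = ∑_{k ≤ j} ω_k X_k, one has for every 1 ≤ j ≤ n: ∑_{(λ,ρ)∈Λ} ∑_{k ≤ j}(λ_k+ρ_k) X^{λ+ρ} ≤ C · ( ∑_{(λ,ρ)∈Λ*} ∑_{k ≤ j}(λ_k+ρ_k) X^{λ+ρ} + X̃_j · ∑_{(λ,ρ)∈Λ*} X^{λ+ρ} ). -/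
open Classical

/-- The set `Λ*` of minimal elements of `Λ` with respect to the componentwise order. -/
noncomputable def resonanceFinsetMin (n : ℕ) (m : ℝ) (ω : Fin n → ℝ) (N : ℕ) :
    Finset ((Fin n → ℕ) × (Fin n → ℕ)) :=
  (resonanceFinset n m ω N).filter
    fun p => ∀ q ∈ resonanceFinset n m ω N,
      (∀ i, q.1 i ≤ p.1 i) → (∀ i, q.2 i ≤ p.2 i) → q = p

lemma exists_min_aux (n : ℕ) (m : ℝ) (ω : Fin n → ℝ) (N : ℕ) (s : ℕ) :
    ∀ p ∈ resonanceFinset n m ω N, (∑ i, (p.1 i + p.2 i)) < s →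
      ∃ q ∈ resonanceFinsetMin n m ω N, (∀ i, q.1 i ≤ p.1 i) ∧ (∀ i, q.2 i ≤ p.2 i) := by
  induction s with
  | zero => intro p _ h; omega
  | succ s ih =>
    intro p hp hs
    by_cases hmin : ∀ q ∈ resonanceFinset n m ω N,
        (∀ i, q.1 i ≤ p.1 i) → (∀ i, q.2 i ≤ p.2 i) → q = p
    · exact ⟨p, Finset.mem_filter.2 ⟨hp, hmin⟩, fun i => le_rfl, fun i => le_rfl⟩
    · push_neg at hmin
      obtain ⟨r, hr, hr1, hr2, hrp⟩ := hmin
      have hlt : (∑ i, (r.1 i + r.2 i)) < ∑ i, (p.1 i + p.2 i) := by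
        have hne : ∃ i, r.1 i + r.2 i < p.1 i + p.2 i := by
          by_contra hc
          push_neg at hc
          apply hrp
          have h1 : r.1 = p.1 := funext fun i =>
            le_antisymm (hr1 i) (by have := hc i; have := hr2 i; omega)
          have h2 : r.2 = p.2 := funext fun i =>
            le_antisymm (hr2 i) (by have := hc i; have := hr1 i; omega)
          exact Prod.ext h1 h2
        obtain ⟨i, hi⟩ := hne
        exact Finset.sum_lt_sum (fun i _ => by have := hr1 i; have := hr2 i; omega)
          ⟨i, Finset.mem_univ i, hi⟩
      obtain ⟨q, hq, hq1, hq2⟩ := ih r hr (by omega)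
      exact ⟨q, hq, fun i => (hq1 i).trans (hr1 i), fun i => (hq2 i).trans (hr2 i)⟩

set_option maxHeartbeats 1000000 in
/-- for `0 ≤ X ≤ 1` and `X̃_j = ∑_{k ≤ j} ω_k X_k`,
`∑_{Λ} ∑_{k ≤ j}(λ_k+ρ_k) X^{λ+ρ}
  ≤ C (∑_{Λ*} ∑_{k ≤ j}(λ_k+ρ_k) X^{λ+ρ} + X̃_j ∑_{Λ*} X^{λ+ρ})`. -/
theorem sum_resonance_le_minimal
    (n : ℕ) (hn : 0 < n) (m : ℝ) (hm : 0 < m) (N : ℕ) (hN : 1 ≤ N)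
    (ω : Fin n → ℝ) (hωm : ∀ i, ω i < m) (hωpos : ∀ i, 0 < ω i)
    (hωanti : StrictAnti ω) :
    ∃ C > (0 : ℝ), ∀ X : Fin n → ℝ, (∀ k, 0 ≤ X k) → (∀ k, X k ≤ 1) →
      ∀ j : Fin n,
      ∑ p ∈ resonanceFinset n m ω N,
          (∑ k ∈ Finset.Iic j, ((p.1 k : ℝ) + (p.2 k : ℝ))) *
            ∏ i, X i ^ (p.1 i + p.2 i) ≤
        C * ((∑ p ∈ resonanceFinsetMin n m ω N,
                (∑ k ∈ Finset.Iic j, ((p.1 k : ℝ) + (p.2 k : ℝ))) *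
                  ∏ i, X i ^ (p.1 i + p.2 i)) +
             (∑ k ∈ Finset.Iic j, ω k * X k) *
               ∑ p ∈ resonanceFinsetMin n m ω N, ∏ i, X i ^ (p.1 i + p.2 i)) := by
  classical
  have hn1 : n - 1 < n := by omega
  set ωmin := ω ⟨n - 1, hn1⟩ with hωmin
  have hωminpos : 0 < ωmin := hωpos _
  have hωmin_le : ∀ k : Fin n, ωmin ≤ ω k := by
    intro k
    exact hωanti.antitone (by simp [Fin.le_def]; omega)
  set Λ := resonanceFinset n m ω N with hΛ
  set Λm := resonanceFinsetMin n m ω N with hΛm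
  refine ⟨((Λ.card : ℝ) + 1) * ((200 * N + 1) * (1 + 1 / ωmin)), by positivity, ?_⟩
  intro X hX0 hX1 j
  set Xt := ∑ k ∈ Finset.Iic j, ω k * X k with hXt
  have hXtnn : 0 ≤ Xt := Finset.sum_nonneg fun k _ => mul_nonneg (hωpos k).le (hX0 k)
  have hprodnn : ∀ p : (Fin n → ℕ) × (Fin n → ℕ), 0 ≤ ∏ i, X i ^ (p.1 i + p.2 i) :=
    fun p => Finset.prod_nonneg fun i _ => pow_nonneg (hX0 i) _
  set S1 := ∑ p ∈ Λm, (∑ k ∈ Finset.Iic j, ((p.1 k : ℝ) + (p.2 k : ℝ))) *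
      ∏ i, X i ^ (p.1 i + p.2 i) with hS1
  set S2 := ∑ p ∈ Λm, ∏ i, X i ^ (p.1 i + p.2 i) with hS2
  have hS1nn : 0 ≤ S1 := Finset.sum_nonneg fun p _ => mul_nonneg
    (Finset.sum_nonneg fun k _ => by positivity) (hprodnn p)
  have hS2nn : 0 ≤ S2 := Finset.sum_nonneg fun p _ => hprodnn p
  have hcnn : (0:ℝ) ≤ 1 / ωmin := by positivity
  have key : ∀ p ∈ Λ,
      (∑ k ∈ Finset.Iic j, ((p.1 k : ℝ) + (p.2 k : ℝ))) * ∏ i, X i ^ (p.1 i + p.2 i)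
        ≤ ((200 * N + 1) * (1 + 1 / ωmin)) * (S1 + Xt * S2) := by
    intro p hp
    obtain ⟨q, hq, hq1, hq2⟩ := exists_min_aux n m ω N (∑ i, (p.1 i + p.2 i) + 1) p hp
      (by omega)
    have hptot : ∑ i, (p.1 i + p.2 i) ≤ 200 * N + 1 :=
      ((Finset.mem_filter.1 hp).2).2.1
    have hwp_nat : (∑ k ∈ Finset.Iic j, (p.1 k + p.2 k)) ≤ 200 * N + 1 :=
      le_trans (Finset.sum_le_sum_of_subset (Finset.subset_univ _)) hptot
    have hwcast : (∑ k ∈ Finset.Iic j, ((p.1 k : ℝ) + (p.2 k : ℝ)))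
        = ((∑ k ∈ Finset.Iic j, (p.1 k + p.2 k) : ℕ) : ℝ) := by push_cast; ring
    have hwple : (∑ k ∈ Finset.Iic j, ((p.1 k : ℝ) + (p.2 k : ℝ))) ≤ (200 * N + 1 : ℝ) := by
      rw [hwcast]; exact_mod_cast hwp_nat
    have hXpq : ∏ i, X i ^ (p.1 i + p.2 i) ≤ ∏ i, X i ^ (q.1 i + q.2 i) :=
      Finset.prod_le_prod (fun i _ => pow_nonneg (hX0 i) _)
        (fun i _ => pow_le_pow_of_le_one (hX0 i) (hX1 i)
          (by have := hq1 i; have := hq2 i; omega))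
    by_cases hwp0 : (∑ k ∈ Finset.Iic j, (p.1 k + p.2 k)) = 0
    · have h0 : (∑ k ∈ Finset.Iic j, ((p.1 k : ℝ) + (p.2 k : ℝ))) = 0 := by
        rw [hwcast, hwp0]; simp
      rw [h0, zero_mul]
      positivity
    · by_cases hwq0 : (∑ k ∈ Finset.Iic j, (q.1 k + q.2 k)) = 0
      · -- minimal element has no weight below j: use the Xt·S2 term
        obtain ⟨k, hk, hk1⟩ : ∃ k ∈ Finset.Iic j, 1 ≤ p.1 k + p.2 k := by
          by_contra hc; push_neg at hc
          exact hwp0 (Finset.sum_eq_zero fun k hk => by have := hc k hk; omega)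
        have hqk0 : q.1 k + q.2 k = 0 := by
          have := (Finset.sum_eq_zero_iff).1 hwq0 k hk; omega
        have hXk : ∏ i, X i ^ (p.1 i + p.2 i) ≤ X k * ∏ i, X i ^ (q.1 i + q.2 i) := by
          rw [← Finset.mul_prod_erase Finset.univ (fun i => X i ^ (p.1 i + p.2 i))
              (Finset.mem_univ k),
            ← Finset.mul_prod_erase Finset.univ (fun i => X i ^ (q.1 i + q.2 i))
              (Finset.mem_univ k)]
          simp only [hqk0, pow_zero, one_mul]
          have h1 : X k ^ (p.1 k + p.2 k) ≤ X k := by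
            calc X k ^ (p.1 k + p.2 k) ≤ X k ^ 1 :=
                  pow_le_pow_of_le_one (hX0 k) (hX1 k) hk1
              _ = X k := pow_one _
          have h2 : ∏ i ∈ Finset.univ.erase k, X i ^ (p.1 i + p.2 i)
              ≤ ∏ i ∈ Finset.univ.erase k, X i ^ (q.1 i + q.2 i) :=
            Finset.prod_le_prod (fun i _ => pow_nonneg (hX0 i) _)
              (fun i _ => pow_le_pow_of_le_one (hX0 i) (hX1 i)
                (by have := hq1 i; have := hq2 i; omega))
          exact mul_le_mul h1 h2
            (Finset.prod_nonneg fun i _ => pow_nonneg (hX0 i) _) (hX0 k)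
        have hXkXt : X k ≤ 1 / ωmin * Xt := by
          have h3 : ωmin * X k ≤ Xt :=
            le_trans (mul_le_mul_of_nonneg_right (hωmin_le k) (hX0 k))
              (Finset.single_le_sum (f := fun i => ω i * X i)
                (fun i _ => mul_nonneg (hωpos i).le (hX0 i)) hk)
          rw [div_mul_eq_mul_div, one_mul, le_div_iff₀ hωminpos]
          linarith [h3, mul_comm (X k) ωmin]
        have hXqS2 : ∏ i, X i ^ (q.1 i + q.2 i) ≤ S2 :=
          Finset.single_le_sum (f := fun r => ∏ i, X i ^ (r.1 i + r.2 i))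
            (fun r _ => hprodnn r) hq
        have hwpnn : 0 ≤ ∑ k ∈ Finset.Iic j, ((p.1 k : ℝ) + (p.2 k : ℝ)) :=
          Finset.sum_nonneg fun k _ => by positivity
        calc (∑ k ∈ Finset.Iic j, ((p.1 k : ℝ) + (p.2 k : ℝ))) *
              ∏ i, X i ^ (p.1 i + p.2 i)
            ≤ (200 * N + 1 : ℝ) * (X k * ∏ i, X i ^ (q.1 i + q.2 i)) :=
              mul_le_mul hwple hXk (hprodnn p) (by positivity)
          _ ≤ (200 * N + 1 : ℝ) * ((1 / ωmin * Xt) * S2) := by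
              refine mul_le_mul_of_nonneg_left ?_ (by positivity)
              exact mul_le_mul hXkXt hXqS2 (hprodnn q) (by positivity)
          _ ≤ ((200 * N + 1) * (1 + 1 / ωmin)) * (S1 + Xt * S2) := by
              have hXtS2 : 0 ≤ Xt * S2 := mul_nonneg hXtnn hS2nn
              have hNpos : (0:ℝ) ≤ (200 * N + 1 : ℝ) := by positivity
              nlinarith [mul_nonneg hcnn hXtS2, mul_nonneg hcnn hS1nn,
                mul_nonneg hNpos hS1nn, mul_nonneg hNpos hXtS2,
                mul_nonneg hNpos (mul_nonneg hcnn hS1nn),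
                mul_nonneg hNpos (mul_nonneg hcnn hXtS2)]
      · -- minimal element has weight ≥ 1 below j: use the S1 term
        have hwq1 : (1:ℝ) ≤ ∑ k ∈ Finset.Iic j, ((q.1 k : ℝ) + (q.2 k : ℝ)) := by
          have : (1:ℕ) ≤ ∑ k ∈ Finset.Iic j, (q.1 k + q.2 k) := by omega
          have hc : (∑ k ∈ Finset.Iic j, ((q.1 k : ℝ) + (q.2 k : ℝ)))
              = ((∑ k ∈ Finset.Iic j, (q.1 k + q.2 k) : ℕ) : ℝ) := by push_cast; ring
          rw [hc]; exact_mod_cast this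
        have hXqS1 : ∏ i, X i ^ (q.1 i + q.2 i) ≤ S1 := by
          calc ∏ i, X i ^ (q.1 i + q.2 i)
              = 1 * ∏ i, X i ^ (q.1 i + q.2 i) := (one_mul _).symm
            _ ≤ (∑ k ∈ Finset.Iic j, ((q.1 k : ℝ) + (q.2 k : ℝ))) *
                ∏ i, X i ^ (q.1 i + q.2 i) :=
                mul_le_mul_of_nonneg_right hwq1 (hprodnn q)
            _ ≤ S1 :=
                Finset.single_le_sum
                  (f := fun r => (∑ k ∈ Finset.Iic j, ((r.1 k : ℝ) + (r.2 k : ℝ))) *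
                    ∏ i, X i ^ (r.1 i + r.2 i))
                  (fun r _ => mul_nonneg
                    (Finset.sum_nonneg fun k _ => by positivity) (hprodnn r)) hq
        calc (∑ k ∈ Finset.Iic j, ((p.1 k : ℝ) + (p.2 k : ℝ))) *
              ∏ i, X i ^ (p.1 i + p.2 i)
            ≤ (200 * N + 1 : ℝ) * S1 :=
              mul_le_mul hwple (hXpq.trans hXqS1) (hprodnn p) (by positivity)
          _ ≤ ((200 * N + 1) * (1 + 1 / ωmin)) * (S1 + Xt * S2) := by
              have hXtS2 : 0 ≤ Xt * S2 := mul_nonneg hXtnn hS2nn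
              have hNpos : (0:ℝ) ≤ (200 * N + 1 : ℝ) := by positivity
              nlinarith [mul_nonneg hNpos hXtS2, mul_nonneg hNpos (mul_nonneg hcnn hS1nn),
                mul_nonneg hNpos (mul_nonneg hcnn hXtS2)]
  have hB : (0:ℝ) ≤ ((200 * N + 1) * (1 + 1 / ωmin)) * (S1 + Xt * S2) := by
    have hXtS2 : 0 ≤ Xt * S2 := mul_nonneg hXtnn hS2nn
    have h1 : (0:ℝ) ≤ (200 * N + 1 : ℝ) * (1 + 1 / ωmin) := by positivity
    nlinarith [mul_nonneg h1 hS1nn, mul_nonneg h1 hXtS2]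
  have htotal : (∑ p ∈ Λ, (∑ k ∈ Finset.Iic j, ((p.1 k : ℝ) + (p.2 k : ℝ))) *
        ∏ i, X i ^ (p.1 i + p.2 i))
      ≤ (Λ.card : ℝ) * (((200 * N + 1) * (1 + 1 / ωmin)) * (S1 + Xt * S2)) := by
    have h := Finset.sum_le_sum key
    rw [Finset.sum_const, nsmul_eq_mul] at h
    exact h
  have hcard : (Λ.card : ℝ) ≤ (Λ.card : ℝ) + 1 := by linarith
  calc (∑ p ∈ Λ, (∑ k ∈ Finset.Iic j, ((p.1 k : ℝ) + (p.2 k : ℝ))) *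
        ∏ i, X i ^ (p.1 i + p.2 i))
      ≤ (Λ.card : ℝ) * (((200 * N + 1) * (1 + 1 / ωmin)) * (S1 + Xt * S2)) := htotal
    _ ≤ ((Λ.card : ℝ) + 1) * (((200 * N + 1) * (1 + 1 / ωmin)) * (S1 + Xt * S2)) :=
        mul_le_mul_of_nonneg_right hcard hB
    _ = ((Λ.card : ℝ) + 1) * ((200 * N + 1) * (1 + 1 / ωmin)) * (S1 + Xt * S2) := by
        ring
end

section
/- There exists a constant C > 0, depending only on n, m, ω_1, ω_n and N, with the following property. Let X ∈ ℝ^n satisfy 0 ≤ X_k ≤ 1 for all k, let 1 ≤ j ≤ n, and let ((λ,ρ),(λ',ρ')) be a pair of elements of Λ with λ − ρ = λ' − ρ' such that not both (λ,ρ) and (λ',ρ') belong to Λ*. Then σ := (λ + ρ + λ' + ρ')/2 is a well-defined element of ℕ^n (componentwise), and X^σ · (λ_j + ρ'_j) ≤ C · ( (max_{1≤k≤n} X_k) · ∑_{(a,b)∈Λ*} X^{a+b}(a_j + b_j) + X_j · ∑_{(a,b)∈Λ*} X^{a+b} ). -/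
open Classical

section Helpers

variable {n : ℕ} {m : ℝ} {ω : Fin n → ℝ} {N : ℕ}

lemma mem_resonance_iff (p : (Fin n → ℕ) × (Fin n → ℕ)) :
    p ∈ resonanceFinset n m ω N ↔
      Odd (∑ i, (p.1 i + p.2 i)) ∧ (∑ i, (p.1 i + p.2 i)) ≤ 200 * N + 1 ∧
        m < ∑ i, ω i * ((p.1 i : ℝ) - (p.2 i : ℝ)) := by
  unfold resonanceFinset
  simp only [Finset.mem_filter, Finset.mem_product, Fintype.mem_piFinset, Finset.mem_range]
  constructor
  · rintro ⟨_, h⟩; exact h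
  · rintro ⟨h1, h2, h3⟩
    refine ⟨⟨fun i => ?_, fun i => ?_⟩, h1, h2, h3⟩ <;>
    · have hs : p.1 i + p.2 i ≤ ∑ i, (p.1 i + p.2 i) :=
        Finset.single_le_sum (f := fun i => p.1 i + p.2 i)
          (fun i _ => Nat.zero_le _) (Finset.mem_univ i)
      omega

lemma below_of_not_min (p : (Fin n → ℕ) × (Fin n → ℕ)) (hp : p ∈ resonanceFinset n m ω N)
    (hnm : p ∉ resonanceFinsetMin n m ω N) :
    ∃ q ∈ resonanceFinset n m ω N, (∀ i, q.1 i ≤ p.1 i) ∧ (∀ i, q.2 i ≤ p.2 i) ∧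
      ∑ i, (q.1 i + q.2 i) < ∑ i, (p.1 i + p.2 i) := by
  rw [resonanceFinsetMin, Finset.mem_filter] at hnm
  push_neg at hnm
  obtain ⟨q, hq, hq1, hq2, hqne⟩ := hnm hp
  refine ⟨q, hq, hq1, hq2, ?_⟩
  have hex : ∃ i, q.1 i + q.2 i < p.1 i + p.2 i := by
    by_contra hno
    push_neg at hno
    apply hqne
    have e1 : q.1 = p.1 := funext fun i => by
      have := hq1 i; have := hq2 i; have := hno i; omega
    have e2 : q.2 = p.2 := funext fun i => by
      have := hq1 i; have := hq2 i; have := hno i; omega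
    exact Prod.ext e1 e2
  obtain ⟨i0, hi0⟩ := hex
  exact Finset.sum_lt_sum (fun i _ => by have := hq1 i; have := hq2 i; omega)
    ⟨i0, Finset.mem_univ _, hi0⟩

lemma exists_min (p : (Fin n → ℕ) × (Fin n → ℕ)) (hp : p ∈ resonanceFinset n m ω N) :
    ∃ q ∈ resonanceFinsetMin n m ω N, (∀ i, q.1 i ≤ p.1 i) ∧ (∀ i, q.2 i ≤ p.2 i) := by
  obtain ⟨k, hk⟩ : ∃ k, ∑ i, (p.1 i + p.2 i) ≤ k := ⟨_, le_rfl⟩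
  induction k generalizing p with
  | zero =>
    by_cases hmin : p ∈ resonanceFinsetMin n m ω N
    · exact ⟨p, hmin, fun _ => le_rfl, fun _ => le_rfl⟩
    · obtain ⟨q, _, _, _, hlt⟩ := below_of_not_min p hp hmin; omega
  | succ k ih =>
    by_cases hmin : p ∈ resonanceFinsetMin n m ω N
    · exact ⟨p, hmin, fun _ => le_rfl, fun _ => le_rfl⟩
    · obtain ⟨q, hq, hq1, hq2, hlt⟩ := below_of_not_min p hp hmin
      obtain ⟨r, hr, hr1, hr2⟩ := ih q hq (by omega)
      exact ⟨r, hr, fun i => (hr1 i).trans (hq1 i), fun i => (hr2 i).trans (hq2 i)⟩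

lemma shrink (j : Fin n) (μ ν : Fin n → ℕ) (h : (μ, ν) ∈ resonanceFinset n m ω N)
    (hμ : 1 ≤ μ j) (hν : 1 ≤ ν j) :
    ∃ q ∈ resonanceFinsetMin n m ω N,
      ∀ i, q.1 i + q.2 i + (if i = j then 2 else 0) ≤ μ i + ν i := by
  have h' : Odd (∑ i, (μ i + ν i)) ∧ (∑ i, (μ i + ν i)) ≤ 200 * N + 1 ∧
      m < ∑ i, ω i * ((μ i : ℝ) - (ν i : ℝ)) := (mem_resonance_iff _).1 h
  obtain ⟨hodd, hbound, hres⟩ := h'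
  set μ₀ : Fin n → ℕ := fun i => μ i - (if i = j then 1 else 0) with hμ₀
  set ν₀ : Fin n → ℕ := fun i => ν i - (if i = j then 1 else 0) with hν₀
  have eμ : ∀ i, μ₀ i = μ i - (if i = j then 1 else 0) := fun _ => rfl
  have eν : ∀ i, ν₀ i = ν i - (if i = j then 1 else 0) := fun _ => rfl
  have hsum : ∀ i, μ₀ i + ν₀ i + (if i = j then 2 else 0) = μ i + ν i := by
    intro i
    rw [eμ i, eν i]
    by_cases hi : i = j
    · subst hi; simp only [if_pos]; omega
    · simp only [if_neg hi]; omega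
  have hsum2 : (∑ i, (μ₀ i + ν₀ i)) + 2 = ∑ i, (μ i + ν i) := by
    have hc := Finset.sum_congr rfl (fun i (_ : i ∈ (Finset.univ : Finset (Fin n))) => hsum i)
    rw [Finset.sum_add_distrib] at hc
    simpa using hc
  have hmem : (μ₀, ν₀) ∈ resonanceFinset n m ω N := by
    rw [mem_resonance_iff]
    refine ⟨?_, ?_, ?_⟩
    · show Odd (∑ i, (μ₀ i + ν₀ i))
      rw [Nat.odd_iff] at hodd ⊢
      omega
    · show (∑ i, (μ₀ i + ν₀ i)) ≤ 200 * N + 1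
      omega
    · show m < ∑ i, ω i * ((μ₀ i : ℝ) - (ν₀ i : ℝ))
      have he : (∑ i, ω i * ((μ₀ i : ℝ) - (ν₀ i : ℝ))) = ∑ i, ω i * ((μ i : ℝ) - (ν i : ℝ)) := by
        refine Finset.sum_congr rfl fun i _ => ?_
        by_cases hi : i = j
        · subst hi
          rw [eμ _, eν _]
          simp only [if_pos]
          rw [Nat.cast_sub hμ, Nat.cast_sub hν]
          push_cast; ring
        · rw [eμ i, eν i]
          simp only [if_neg hi]
          simp
      rw [he]; exact hres
  obtain ⟨q, hq, hq1, hq2⟩ := exists_min (μ₀, ν₀) hmem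
  refine ⟨q, hq, fun i => ?_⟩
  have h1 : q.1 i ≤ μ₀ i := hq1 i
  have h2 : q.2 i ≤ ν₀ i := hq2 i
  have h3 := hsum i
  omega

lemma combo (j : Fin n) (lam rho lam' rho' : Fin n → ℕ)
    (h1 : (lam, rho) ∈ resonanceFinset n m ω N)
    (h2 : (lam', rho') ∈ resonanceFinset n m ω N)
    (hd : ∀ i, lam i + rho' i = lam' i + rho i)
    (hnm : (lam, rho) ∉ resonanceFinsetMin n m ω N)
    (hσj : 1 ≤ lam j + rho' j) :
    ∃ pa ∈ resonanceFinsetMin n m ω N, ∃ pb ∈ resonanceFinsetMin n m ω N,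
      ∃ v : Fin n → ℕ,
        (∀ i, (pa.1 i + pa.2 i) + (pb.1 i + pb.2 i) + v i ≤ 2 * (lam i + rho' i)) ∧
        (2 ≤ v j ∨
          (1 ≤ v j ∧ 2 ≤ ∑ i, v i ∧ 1 ≤ pa.1 j + pa.2 j) ∨
          (2 ≤ ∑ i, v i ∧ 1 ≤ pa.1 j + pa.2 j ∧ 1 ≤ pb.1 j + pb.2 j)) := by
  obtain ⟨q0, hq0, hq0a', hq0b', hq0lt'⟩ := below_of_not_min _ h1 hnm
  have hq0a : ∀ i, q0.1 i ≤ lam i := hq0a'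
  have hq0b : ∀ i, q0.2 i ≤ rho i := hq0b'
  have hq0lt : ∑ i, (q0.1 i + q0.2 i) < ∑ i, (lam i + rho i) := hq0lt'
  obtain ⟨pa, hpa, hpa1, hpa2⟩ := exists_min q0 hq0
  obtain ⟨pb, hpb, hpb1', hpb2'⟩ := exists_min (lam', rho') h2
  have hpb1 : ∀ i, pb.1 i ≤ lam' i := hpb1'
  have hpb2 : ∀ i, pb.2 i ≤ rho' i := hpb2'
  have hpaΛ : pa ∈ resonanceFinset n m ω N := (Finset.mem_filter.1 hpa).1
  have hodd_pa : Odd (∑ i, (pa.1 i + pa.2 i)) := ((mem_resonance_iff pa).1 hpaΛ).1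
  have hodd1 : Odd (∑ i, (lam i + rho i)) := ((mem_resonance_iff (lam, rho)).1 h1).1
  have hpa_le1 : ∀ i, pa.1 i ≤ lam i := fun i => (hpa1 i).trans (hq0a i)
  have hpa_le2 : ∀ i, pa.2 i ≤ rho i := fun i => (hpa2 i).trans (hq0b i)
  have hpasum : ∑ i, (pa.1 i + pa.2 i) + 2 ≤ ∑ i, (lam i + rho i) := by
    have hle : ∑ i, (pa.1 i + pa.2 i) ≤ ∑ i, (q0.1 i + q0.2 i) :=
      Finset.sum_le_sum fun i _ => by have := hpa1 i; have := hpa2 i; omega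
    rw [Nat.odd_iff] at hodd_pa hodd1
    omega
  have hpbsum : ∀ i, pb.1 i + pb.2 i ≤ lam' i + rho' i := fun i => by
    have := hpb1 i; have := hpb2 i; omega
  have h2σ : ∀ i, (lam i + rho i) + (lam' i + rho' i) = 2 * (lam i + rho' i) := fun i => by
    have := hd i; omega
  set v : Fin n → ℕ :=
    fun i => 2 * (lam i + rho' i) - ((pa.1 i + pa.2 i) + (pb.1 i + pb.2 i)) with hv
  have hvle : ∀ i, (pa.1 i + pa.2 i) + (pb.1 i + pb.2 i) + v i = 2 * (lam i + rho' i) := by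
    intro i
    have ha := hpa_le1 i; have hb := hpa_le2 i; have hc := hpbsum i; have he := h2σ i
    simp only [hv]; omega
  have hvsum : 2 ≤ ∑ i, v i := by
    have hs := Finset.sum_congr rfl (fun i (_ : i ∈ (Finset.univ : Finset (Fin n))) => hvle i)
    rw [Finset.sum_add_distrib, Finset.sum_add_distrib] at hs
    have h2s : ∑ i, 2 * (lam i + rho' i) = (∑ i, (lam i + rho i)) + ∑ i, (lam' i + rho' i) := by
      rw [← Finset.sum_add_distrib]
      exact Finset.sum_congr rfl fun i _ => (h2σ i).symm
    have hpbs : ∑ i, (pb.1 i + pb.2 i) ≤ ∑ i, (lam' i + rho' i) :=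
      Finset.sum_le_sum fun i _ => hpbsum i
    omega
  have hvj := hvle j
  by_cases hA : 2 ≤ v j
  · exact ⟨pa, hpa, pb, hpb, v, fun i => (hvle i).le, Or.inl hA⟩
  by_cases hB : v j = 1
  · by_cases hC : 1 ≤ pa.1 j + pa.2 j
    · exact ⟨pa, hpa, pb, hpb, v, fun i => (hvle i).le,
        Or.inr (Or.inl ⟨by omega, hvsum, hC⟩)⟩
    · have hC' : 1 ≤ pb.1 j + pb.2 j := by omega
      exact ⟨pb, hpb, pa, hpa, v, fun i => by have := hvle i; omega,
        Or.inr (Or.inl ⟨by omega, hvsum, hC'⟩)⟩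
  · have hv0 : v j = 0 := by omega
    by_cases hC : 1 ≤ pa.1 j + pa.2 j
    · by_cases hD : 1 ≤ pb.1 j + pb.2 j
      · exact ⟨pa, hpa, pb, hpb, v, fun i => (hvle i).le, Or.inr (Or.inr ⟨hvsum, hC, hD⟩)⟩
      · have hlj : 1 ≤ lam j ∧ 1 ≤ rho j ∧ lam' j + rho' j = 0 := by
          have := hpa_le1 j; have := hpa_le2 j; have := hpbsum j; have := hd j; omega
        obtain ⟨pc, hpc, hpcle⟩ := shrink j lam rho h1 hlj.1 hlj.2.1
        refine ⟨pc, hpc, pb, hpb, (fun i => if i = j then 2 else 0), fun i => ?_,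
          Or.inl (by simp)⟩
        show (pc.1 i + pc.2 i) + (pb.1 i + pb.2 i) + (if i = j then 2 else 0) ≤
          2 * (lam i + rho' i)
        have := hpcle i; have := hpbsum i; have := h2σ i
        omega
    · have hlj : 1 ≤ lam' j ∧ 1 ≤ rho' j := by
        have := hpa_le1 j; have := hpa_le2 j; have := hpbsum j; have := hd j; omega
      obtain ⟨pc, hpc, hpcle⟩ := shrink j lam' rho' h2 hlj.1 hlj.2
      refine ⟨pa, hpa, pc, hpc, (fun i => if i = j then 2 else 0), fun i => ?_,
        Or.inl (by simp)⟩
      show (pa.1 i + pa.2 i) + (pc.1 i + pc.2 i) + (if i = j then 2 else 0) ≤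
        2 * (lam i + rho' i)
      have := hpcle i; have := hpa_le1 i; have := hpa_le2 i; have := h2σ i
      omega

end Helpers

section Analytic

lemma amgm {p q r : ℝ} (hr : 0 ≤ r) (hp : 0 ≤ p) (hq : 0 ≤ q) (h : r ^ 2 ≤ p * q) :
    2 * r ≤ p + q := by
  nlinarith [sq_nonneg (p - q), sq_nonneg (p + q - 2 * r)]

variable {n : ℕ}

lemma prod_pow_nonneg (X : Fin n → ℝ) (hX0 : ∀ i, 0 ≤ X i) (w : Fin n → ℕ) :
    0 ≤ ∏ i, X i ^ w i :=
  Finset.prod_nonneg fun i _ => pow_nonneg (hX0 i) _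

lemma prod_pow_mono (X : Fin n → ℝ) (hX0 : ∀ i, 0 ≤ X i) (hX1 : ∀ i, X i ≤ 1)
    (w w' : Fin n → ℕ) (h : ∀ i, w i ≤ w' i) :
    ∏ i, X i ^ w' i ≤ ∏ i, X i ^ w i :=
  Finset.prod_le_prod (fun i _ => pow_nonneg (hX0 i) _)
    (fun i _ => pow_le_pow_of_le_one (hX0 i) (hX1 i) (h i))

lemma prod_pow_le_max (X : Fin n → ℝ) (M : ℝ) (hX0 : ∀ i, 0 ≤ X i) (hXM : ∀ i, X i ≤ M)
    (w : Fin n → ℕ) : ∏ i, X i ^ w i ≤ M ^ (∑ i, w i) := by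
  calc ∏ i, X i ^ w i ≤ ∏ i, M ^ w i :=
        Finset.prod_le_prod (fun i _ => pow_nonneg (hX0 i) _)
          (fun i _ => pow_le_pow_left₀ (hX0 i) (hXM i) _)
    _ = M ^ (∑ i, w i) := Finset.prod_pow_eq_pow_sum _ _ _

lemma Pv_A (X : Fin n → ℝ) (hX0 : ∀ i, 0 ≤ X i) (hX1 : ∀ i, X i ≤ 1)
    (v : Fin n → ℕ) (j : Fin n) (h : 2 ≤ v j) : ∏ i, X i ^ v i ≤ X j ^ 2 := by
  calc ∏ i, X i ^ v i ≤ ∏ i, X i ^ (if i = j then 2 else 0) := by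
        refine prod_pow_mono X hX0 hX1 _ _ (fun i => ?_)
        by_cases hi : i = j
        · subst hi; simpa using h
        · simp [hi]
    _ = X j ^ 2 := by
        rw [Finset.prod_congr rfl (fun i (_ : i ∈ (Finset.univ : Finset (Fin n))) =>
          (by split <;> simp : X i ^ (if i = j then 2 else 0) = if i = j then X i ^ 2 else 1)),
          Finset.prod_ite_eq' Finset.univ j (fun i => X i ^ 2)]
        simp

lemma Pv_B (X : Fin n → ℝ) (M : ℝ) (hX0 : ∀ i, 0 ≤ X i) (hXM : ∀ i, X i ≤ M)
    (hM0 : 0 ≤ M) (hM1 : M ≤ 1)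
    (v : Fin n → ℕ) (j : Fin n) (hj : 1 ≤ v j) (hs : 2 ≤ ∑ i, v i) :
    ∏ i, X i ^ v i ≤ X j * M := by
  set v' : Fin n → ℕ := fun i => v i - (if i = j then 1 else 0) with hv'
  have ev : ∀ i, v' i = v i - (if i = j then 1 else 0) := fun _ => rfl
  have hvv : ∀ i, v i = (if i = j then 1 else 0) + v' i := by
    intro i
    rw [ev i]
    by_cases hi : i = j
    · subst hi; simp only [if_pos]; omega
    · simp only [if_neg hi]; omega
  have hsplit : ∏ i, X i ^ v i = (∏ i, X i ^ (if i = j then 1 else 0)) * ∏ i, X i ^ v' i := by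
    rw [← Finset.prod_mul_distrib]
    exact Finset.prod_congr rfl fun i _ => by rw [← pow_add, ← hvv i]
  have h1 : (∏ i, X i ^ (if i = j then 1 else 0)) = X j := by
    rw [Finset.prod_congr rfl (fun i (_ : i ∈ (Finset.univ : Finset (Fin n))) =>
      (by split <;> simp : X i ^ (if i = j then 1 else 0) = if i = j then X i else 1)),
      Finset.prod_ite_eq' Finset.univ j (fun i => X i)]
    simp
  have hsum' : 1 ≤ ∑ i, v' i := by
    have hcg := Finset.sum_congr rfl (fun i (_ : i ∈ (Finset.univ : Finset (Fin n))) => hvv i)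
    rw [Finset.sum_add_distrib] at hcg
    have h2 : (∑ i : Fin n, (if i = j then 1 else 0)) = 1 := by simp
    rw [h2] at hcg
    rw [hcg] at hs
    omega
  have h3 : ∏ i, X i ^ v' i ≤ M := by
    calc ∏ i, X i ^ v' i ≤ M ^ (∑ i, v' i) := prod_pow_le_max X M hX0 hXM v'
      _ ≤ M ^ 1 := pow_le_pow_of_le_one hM0 hM1 hsum'
      _ = M := pow_one M
  rw [hsplit, h1]
  exact mul_le_mul_of_nonneg_left h3 (hX0 j)

lemma Pv_C (X : Fin n → ℝ) (M : ℝ) (hX0 : ∀ i, 0 ≤ X i) (hXM : ∀ i, X i ≤ M)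
    (hM0 : 0 ≤ M) (hM1 : M ≤ 1) (v : Fin n → ℕ) (hs : 2 ≤ ∑ i, v i) :
    ∏ i, X i ^ v i ≤ M * M := by
  calc ∏ i, X i ^ v i ≤ M ^ (∑ i, v i) := prod_pow_le_max X M hX0 hXM v
    _ ≤ M ^ 2 := pow_le_pow_of_le_one hM0 hM1 hs
    _ = M * M := sq M

end Analytic

section Aux

variable {n : ℕ}

lemma aux_bound (hn : 0 < n) (m : ℝ) (ω : Fin n → ℝ) (N : ℕ)
    (X : Fin n → ℝ) (hX0 : ∀ k, 0 ≤ X k) (hX1 : ∀ k, X k ≤ 1) (j : Fin n)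
    (lam rho lam' rho' : Fin n → ℕ)
    (h1 : (lam, rho) ∈ resonanceFinset n m ω N)
    (h2 : (lam', rho') ∈ resonanceFinset n m ω N)
    (hd : ∀ i, lam i + rho' i = lam' i + rho i)
    (hnm : (lam, rho) ∉ resonanceFinsetMin n m ω N) :
    (∏ i, X i ^ (lam i + rho' i)) * ((lam j : ℝ) + (rho' j : ℝ)) ≤
      (400 * N + 2 : ℝ) *
        ((Finset.univ.sup' ⟨⟨0, hn⟩, Finset.mem_univ _⟩ X) *
            (∑ p ∈ resonanceFinsetMin n m ω N,
              (∏ i, X i ^ (p.1 i + p.2 i)) * ((p.1 j : ℝ) + (p.2 j : ℝ))) +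
          X j * ∑ p ∈ resonanceFinsetMin n m ω N, ∏ i, X i ^ (p.1 i + p.2 i)) := by
  set M := Finset.univ.sup' ⟨⟨0, hn⟩, Finset.mem_univ _⟩ X with hM
  set S := ∑ p ∈ resonanceFinsetMin n m ω N, ∏ i, X i ^ (p.1 i + p.2 i) with hS
  set T := ∑ p ∈ resonanceFinsetMin n m ω N,
    (∏ i, X i ^ (p.1 i + p.2 i)) * ((p.1 j : ℝ) + (p.2 j : ℝ)) with hT
  have hXM : ∀ i, X i ≤ M := fun i => Finset.le_sup' X (Finset.mem_univ i)
  have hM0 : 0 ≤ M := (hX0 ⟨0, hn⟩).trans (hXM _)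
  have hM1 : M ≤ 1 := Finset.sup'_le _ _ fun i _ => hX1 i
  have hS0 : 0 ≤ S := Finset.sum_nonneg fun p _ => prod_pow_nonneg X hX0 _
  have hT0 : 0 ≤ T := Finset.sum_nonneg fun p _ =>
    mul_nonneg (prod_pow_nonneg X hX0 _) (by positivity)
  have htS : ∀ p ∈ resonanceFinsetMin n m ω N, (∏ i, X i ^ (p.1 i + p.2 i)) ≤ S := fun p hp =>
    Finset.single_le_sum (f := fun q => ∏ i, X i ^ (q.1 i + q.2 i))
      (fun q _ => prod_pow_nonneg X hX0 _) hp
  have htT : ∀ p ∈ resonanceFinsetMin n m ω N, 1 ≤ p.1 j + p.2 j →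
      (∏ i, X i ^ (p.1 i + p.2 i)) ≤ T := by
    intro p hp hpj
    calc (∏ i, X i ^ (p.1 i + p.2 i))
        ≤ (∏ i, X i ^ (p.1 i + p.2 i)) * ((p.1 j : ℝ) + (p.2 j : ℝ)) := by
          apply le_mul_of_one_le_right (prod_pow_nonneg X hX0 _)
          exact_mod_cast hpj
      _ ≤ T := Finset.single_le_sum
          (f := fun q => (∏ i, X i ^ (q.1 i + q.2 i)) * ((q.1 j : ℝ) + (q.2 j : ℝ)))
          (fun q _ => mul_nonneg (prod_pow_nonneg X hX0 _) (by positivity)) hp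
  have hK : lam j + rho' j ≤ 400 * N + 2 := by
    have ha : ∑ i, (lam i + rho i) ≤ 200 * N + 1 :=
      ((mem_resonance_iff (lam, rho)).1 h1).2.1
    have hb : ∑ i, (lam' i + rho' i) ≤ 200 * N + 1 :=
      ((mem_resonance_iff (lam', rho')).1 h2).2.1
    have hc : lam j + rho j ≤ ∑ i, (lam i + rho i) :=
      Finset.single_le_sum (f := fun i => lam i + rho i) (fun i _ => Nat.zero_le _)
        (Finset.mem_univ j)
    have hd' : lam' j + rho' j ≤ ∑ i, (lam' i + rho' i) :=
      Finset.single_le_sum (f := fun i => lam' i + rho' i) (fun i _ => Nat.zero_le _)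
        (Finset.mem_univ j)
    omega
  have hQ0 : (0:ℝ) ≤ M * T + X j * S :=
    add_nonneg (mul_nonneg hM0 hT0) (mul_nonneg (hX0 j) hS0)
  by_cases hσ0 : lam j + rho' j = 0
  · have hz : (lam j : ℝ) + (rho' j : ℝ) = 0 := by
      have h1' : lam j = 0 := by omega
      have h2' : rho' j = 0 := by omega
      simp [h1', h2']
    rw [hz, mul_zero]
    exact mul_nonneg (by positivity) hQ0
  have hσj : 1 ≤ lam j + rho' j := by omega
  obtain ⟨pa, hpa, pb, hpb, v, hle, hcase⟩ := combo j lam rho lam' rho' h1 h2 hd hnm hσj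
  set Pσ := ∏ i, X i ^ (lam i + rho' i) with hPσ
  set Pu := ∏ i, X i ^ (pa.1 i + pa.2 i) with hPu
  set Pu' := ∏ i, X i ^ (pb.1 i + pb.2 i) with hPu'
  set Pv := ∏ i, X i ^ v i with hPv
  have hkey : Pσ ^ 2 ≤ Pu * Pu' * Pv := by
    have e1 : Pσ ^ 2 = ∏ i, X i ^ (2 * (lam i + rho' i)) := by
      rw [hPσ, ← Finset.prod_pow]
      exact Finset.prod_congr rfl fun i _ => by
        rw [← pow_mul, Nat.mul_comm (lam i + rho' i) 2]
    have e2 : Pu * Pu' * Pv = ∏ i, X i ^ ((pa.1 i + pa.2 i) + (pb.1 i + pb.2 i) + v i) := by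
      rw [hPu, hPu', hPv, ← Finset.prod_mul_distrib, ← Finset.prod_mul_distrib]
      exact Finset.prod_congr rfl fun i _ => by ring
    rw [e1, e2]
    exact prod_pow_mono X hX0 hX1 _ _ hle
  have hPσ0 : 0 ≤ Pσ := prod_pow_nonneg X hX0 _
  have hPu0 : 0 ≤ Pu := prod_pow_nonneg X hX0 _
  have hPu'0 : 0 ≤ Pu' := prod_pow_nonneg X hX0 _
  have hPuS : Pu ≤ S := htS pa hpa
  have hPu'S : Pu' ≤ S := htS pb hpb
  have hc0 : (0:ℝ) ≤ (lam j : ℝ) + (rho' j : ℝ) := by positivity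
  have hcK : (lam j : ℝ) + (rho' j : ℝ) ≤ (400 * N + 2 : ℝ) := by exact_mod_cast hK
  have hfinal : Pσ ≤ M * T + X j * S := by
    rcases hcase with hA | ⟨hb1, hb2, hb3⟩ | ⟨hc1, hc2, hc3⟩
    · have hv : Pv ≤ X j ^ 2 := Pv_A X hX0 hX1 v j hA
      have h2r : Pσ ^ 2 ≤ (X j * Pu) * (X j * Pu') := by
        calc Pσ ^ 2 ≤ Pu * Pu' * Pv := hkey
          _ ≤ Pu * Pu' * (X j ^ 2) :=
            mul_le_mul_of_nonneg_left hv (mul_nonneg hPu0 hPu'0)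
          _ = (X j * Pu) * (X j * Pu') := by ring
      have hamgm := amgm hPσ0 (mul_nonneg (hX0 j) hPu0) (mul_nonneg (hX0 j) hPu'0) h2r
      have e1 := mul_le_mul_of_nonneg_left hPuS (hX0 j)
      have e2 := mul_le_mul_of_nonneg_left hPu'S (hX0 j)
      have hMT : (0:ℝ) ≤ M * T := mul_nonneg hM0 hT0
      linarith
    · have hv : Pv ≤ X j * M := Pv_B X M hX0 hXM hM0 hM1 v j hb1 hb2
      have hPuT : Pu ≤ T := htT pa hpa hb3
      have h2r : Pσ ^ 2 ≤ (M * Pu) * (X j * Pu') := by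
        calc Pσ ^ 2 ≤ Pu * Pu' * Pv := hkey
          _ ≤ Pu * Pu' * (X j * M) :=
            mul_le_mul_of_nonneg_left hv (mul_nonneg hPu0 hPu'0)
          _ = (M * Pu) * (X j * Pu') := by ring
      have hamgm := amgm hPσ0 (mul_nonneg hM0 hPu0) (mul_nonneg (hX0 j) hPu'0) h2r
      have e1 := mul_le_mul_of_nonneg_left hPuT hM0
      have e2 := mul_le_mul_of_nonneg_left hPu'S (hX0 j)
      linarith
    · have hv : Pv ≤ M * M := Pv_C X M hX0 hXM hM0 hM1 v hc1
      have hPuT : Pu ≤ T := htT pa hpa hc2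
      have hPu'T : Pu' ≤ T := htT pb hpb hc3
      have h2r : Pσ ^ 2 ≤ (M * Pu) * (M * Pu') := by
        calc Pσ ^ 2 ≤ Pu * Pu' * Pv := hkey
          _ ≤ Pu * Pu' * (M * M) :=
            mul_le_mul_of_nonneg_left hv (mul_nonneg hPu0 hPu'0)
          _ = (M * Pu) * (M * Pu') := by ring
      have hamgm := amgm hPσ0 (mul_nonneg hM0 hPu0) (mul_nonneg hM0 hPu'0) h2r
      have e1 := mul_le_mul_of_nonneg_left hPuT hM0
      have e2 := mul_le_mul_of_nonneg_left hPu'T hM0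
      have hXS : (0:ℝ) ≤ X j * S := mul_nonneg (hX0 j) hS0
      linarith
  calc Pσ * ((lam j : ℝ) + (rho' j : ℝ))
      ≤ (M * T + X j * S) * ((lam j : ℝ) + (rho' j : ℝ)) :=
        mul_le_mul_of_nonneg_right hfinal hc0
    _ ≤ (M * T + X j * S) * (400 * N + 2 : ℝ) := mul_le_mul_of_nonneg_left hcK hQ0
    _ = (400 * N + 2 : ℝ) * (M * T + X j * S) := by ring

end Aux

/-- for `0 ≤ X ≤ 1` and a pair `(λ,ρ), (λ',ρ') ∈ Λ` with
`λ - ρ = λ' - ρ'` not both minimal, `σ = (λ+ρ+λ'+ρ')/2` is a well-defined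
multi-index and `X^σ (λ_j + ρ'_j)` is dominated by
`C ((max_k X_k) ∑_{Λ*} X^{a+b}(a_j+b_j) + X_j ∑_{Λ*} X^{a+b})`. -/
theorem nonminimal_pair_perturbative_bound
    (n : ℕ) (hn : 0 < n) (m : ℝ) (hm : 0 < m) (N : ℕ) (hN : 1 ≤ N)
    (ω : Fin n → ℝ) (hωm : ∀ i, ω i < m) (hωpos : ∀ i, 0 < ω i)
    (hωanti : StrictAnti ω) :
    ∃ C > (0 : ℝ), ∀ X : Fin n → ℝ, (∀ k, 0 ≤ X k) → (∀ k, X k ≤ 1) →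
      ∀ j : Fin n, ∀ lam rho lam' rho' : Fin n → ℕ,
      (lam, rho) ∈ resonanceFinset n m ω N →
      (lam', rho') ∈ resonanceFinset n m ω N →
      (∀ i, (lam i : ℤ) - (rho i : ℤ) = (lam' i : ℤ) - (rho' i : ℤ)) →
      ¬((lam, rho) ∈ resonanceFinsetMin n m ω N ∧
        (lam', rho') ∈ resonanceFinsetMin n m ω N) →
      (∀ i, 2 ∣ (lam i + rho i + lam' i + rho' i)) ∧
      (∏ i, X i ^ ((lam i + rho i + lam' i + rho' i) / 2)) *
          ((lam j : ℝ) + (rho' j : ℝ)) ≤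
        C * ((Finset.univ.sup' ⟨⟨0, hn⟩, Finset.mem_univ _⟩ X) *
              (∑ p ∈ resonanceFinsetMin n m ω N,
                (∏ i, X i ^ (p.1 i + p.2 i)) * ((p.1 j : ℝ) + (p.2 j : ℝ))) +
            X j * ∑ p ∈ resonanceFinsetMin n m ω N, ∏ i, X i ^ (p.1 i + p.2 i)) := by
  refine ⟨(400 * N + 2 : ℝ), by positivity, ?_⟩
  intro X hX0 hX1 j lam rho lam' rho' h1 h2 hdz hboth
  have hd : ∀ i, lam i + rho' i = lam' i + rho i := fun i => by have := hdz i; omega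
  have hdvd : ∀ i, 2 ∣ (lam i + rho i + lam' i + rho' i) := fun i => by
    have := hd i; omega
  refine ⟨hdvd, ?_⟩
  have hprod : (∏ i, X i ^ ((lam i + rho i + lam' i + rho' i) / 2)) =
      ∏ i, X i ^ (lam i + rho' i) :=
    Finset.prod_congr rfl fun i _ => by
      have := hd i
      congr 1
      omega
  rw [hprod]
  rcases not_and_or.1 hboth with hnm | hnm
  · exact aux_bound hn m ω N X hX0 hX1 j lam rho lam' rho' h1 h2 hd hnm
  · have hd' : ∀ i, lam' i + rho i = lam i + rho' i := fun i => (hd i).symm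
    have hres := aux_bound hn m ω N X hX0 hX1 j lam' rho' lam rho h2 h1 hd' hnm
    have e1 : (∏ i, X i ^ (lam' i + rho i)) = ∏ i, X i ^ (lam i + rho' i) :=
      Finset.prod_congr rfl fun i _ => by rw [hd' i]
    have e2 : ((lam' j : ℝ) + (rho j : ℝ)) = (lam j : ℝ) + (rho' j : ℝ) := by
      exact_mod_cast hd' j
    rw [e1, e2] at hres
    exact hres
end

section
/- Let N ≥ 1 be an integer and κ > 0. There exists a constant C > 0, depending only on N and κ, such that for every ε ∈ (0, 1/2]: ∫_0^∞ ε²(1 + 2N ε^{4N} t)^{−1/(2N)} · ε^κ (1 + ε^κ t)^{−1} dt ≤ C ε. -/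
open MeasureTheory Set

private lemma rpow_le_one_add_aux (x p : ℝ) (hx : 0 ≤ x) (hp0 : 0 ≤ p) (hp1 : p ≤ 1) :
    x ^ p ≤ 1 + x := by
  rcases le_total x 1 with h | h
  · calc x ^ p ≤ 1 := Real.rpow_le_one hx h hp0
    _ ≤ 1 + x := by linarith
  · calc x ^ p ≤ x ^ (1 : ℝ) := Real.rpow_le_rpow_of_exponent_le h hp1
    _ = x := Real.rpow_one x
    _ ≤ 1 + x := by linarith

/-- with `Y(t) = ε²(1+2Nε^{4N}t)^{-1/(2N)}` and
`W(t) = ε^κ(1+ε^κ t)^{-1}`, one has `∫_0^∞ Y W dt ≤ C ε` uniformly for `ε ∈ (0,1/2]`. -/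
theorem integral_Y_mul_W_le
    (N : ℕ) (hN : 1 ≤ N) (κ : ℝ) (hκ : 0 < κ) :
    ∃ C > (0 : ℝ), ∀ ε : ℝ, 0 < ε → ε ≤ 1 / 2 →
      ∫ t in Set.Ioi (0 : ℝ),
          (ε ^ 2 * (1 + 2 * (N : ℝ) * ε ^ (4 * N) * t) ^ (-(1 / (2 * (N : ℝ))))) *
            (ε ^ κ * (1 + ε ^ κ * t)⁻¹) ≤ C * ε := by
  have hN0 : (0 : ℝ) < N := by exact_mod_cast hN
  have hN1 : (1 : ℝ) ≤ N := by exact_mod_cast hN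
  refine ⟨6 * (N : ℝ) + 1, by positivity, ?_⟩
  intro ε hε hε2
  have hε1 : ε ≤ 1 := by linarith
  set f : ℝ → ℝ := fun t =>
      (ε ^ 2 * (1 + 2 * (N : ℝ) * ε ^ (4 * N) * t) ^ (-(1 / (2 * (N : ℝ))))) *
        (ε ^ κ * (1 + ε ^ κ * t)⁻¹) with hfdef
  set δ : ℝ := 1 / (4 * (N : ℝ) + 1) with hδdef
  have hδ : 0 < δ := by positivity
  have hδ1 : δ ≤ 1 := by
    rw [hδdef, div_le_one (by positivity)]; linarith
  have h4Nδ : 4 * (N : ℝ) * δ ≤ 1 := by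
    rw [hδdef, mul_one_div, div_le_one (by positivity)]; linarith
  set T : ℝ := ε ^ (-(4 * (N : ℝ))) with hTdef
  have hT : 0 < T := Real.rpow_pos_of_pos hε _
  have hεκ : 0 < ε ^ κ := Real.rpow_pos_of_pos hε κ
  have hε4N : 0 < ε ^ (4 * N) := pow_pos hε _
  have hc : 0 < 1 / (2 * (N : ℝ)) := by positivity
  -- the base `1 + 2N ε^{4N} t` is `≥ 1` for `t ≥ 0`
  have hbase : ∀ t : ℝ, 0 ≤ t → (1 : ℝ) ≤ 1 + 2 * (N : ℝ) * ε ^ (4 * N) * t := by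
    intro t ht
    have : 0 ≤ 2 * (N : ℝ) * ε ^ (4 * N) * t :=
      mul_nonneg (by positivity) ht
    linarith
  have hden : ∀ t : ℝ, 0 ≤ t → (0 : ℝ) < 1 + ε ^ κ * t := by
    intro t ht
    have : 0 ≤ ε ^ κ * t := mul_nonneg hεκ.le ht
    linarith
  have hf_nonneg : ∀ t : ℝ, 0 ≤ t → 0 ≤ f t := by
    intro t ht
    have h1 := hbase t ht
    exact mul_nonneg (mul_nonneg (by positivity) (Real.rpow_nonneg (by linarith) _))
      (mul_nonneg hεκ.le (inv_nonneg.mpr (hden t ht).le))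
  -- continuity of `f` on `Ici 0`
  have hcont : ContinuousOn f (Ici (0 : ℝ)) := by
    apply ContinuousOn.mul
    · apply ContinuousOn.mul continuousOn_const
      apply ContinuousOn.rpow_const
      · exact continuousOn_const.add (continuousOn_const.mul continuousOn_id)
      · intro t ht
        left
        have := hbase t ht
        linarith
    · apply ContinuousOn.mul continuousOn_const
      apply ContinuousOn.inv₀ (continuousOn_const.add (continuousOn_const.mul continuousOn_id))
      intro t ht
      exact (hden t ht).ne'
  -- pointwise bound on `Ioc 0 T`
  have hbound1 : ∀ t ∈ Ioc (0 : ℝ) T, f t ≤ ε ^ ((2 : ℝ) + κ * δ) * t ^ (δ - 1) := by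
    intro t ht
    have ht0 : 0 < t := ht.1
    have hx : (0 : ℝ) < ε ^ κ * t := mul_pos hεκ ht0
    have hA : (1 + 2 * (N : ℝ) * ε ^ (4 * N) * t) ^ (-(1 / (2 * (N : ℝ)))) ≤ 1 :=
      Real.rpow_le_one_of_one_le_of_nonpos (hbase t ht0.le) (by linarith)
    have hA0 : 0 ≤ (1 + 2 * (N : ℝ) * ε ^ (4 * N) * t) ^ (-(1 / (2 * (N : ℝ)))) :=
      Real.rpow_nonneg (by have := hbase t ht0.le; linarith) _
    have key : (ε ^ κ * t) ^ (1 - δ) ≤ 1 + ε ^ κ * t :=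
      rpow_le_one_add_aux _ _ hx.le (by linarith) (by linarith)
    have hkeypos : (0 : ℝ) < (ε ^ κ * t) ^ (1 - δ) := Real.rpow_pos_of_pos hx _
    have hWineq : ε ^ κ * (1 + ε ^ κ * t)⁻¹ ≤ ε ^ κ * ((ε ^ κ * t) ^ (1 - δ))⁻¹ := by
      apply mul_le_mul_of_nonneg_left _ hεκ.le
      exact inv_anti₀ hkeypos key
    have e1 : ε ^ κ * ((ε ^ κ * t) ^ (1 - δ))⁻¹ = ε ^ (κ * δ) * t ^ (δ - 1) := by
      rw [← Real.rpow_neg hx.le, Real.mul_rpow hεκ.le ht0.le, ← Real.rpow_mul hε.le,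
        ← mul_assoc, ← Real.rpow_add hε]
      have h1 : κ + κ * -(1 - δ) = κ * δ := by ring
      have h2 : -(1 - δ) = δ - 1 := by ring
      rw [h1, h2]
    calc f t ≤ (ε ^ 2 * 1) * (ε ^ κ * (1 + ε ^ κ * t)⁻¹) := by
          apply mul_le_mul_of_nonneg_right _ (mul_nonneg hεκ.le (inv_nonneg.mpr (hden t ht0.le).le))
          exact mul_le_mul_of_nonneg_left hA (by positivity)
      _ = ε ^ 2 * (ε ^ κ * (1 + ε ^ κ * t)⁻¹) := by ring
      _ ≤ ε ^ 2 * (ε ^ (κ * δ) * t ^ (δ - 1)) := by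
          apply mul_le_mul_of_nonneg_left _ (by positivity)
          rw [← e1]; exact hWineq
      _ = ε ^ ((2 : ℝ) + κ * δ) * t ^ (δ - 1) := by
          rw [← Real.rpow_natCast ε 2, ← mul_assoc, ← Real.rpow_add hε]
          norm_num
  -- pointwise bound on `Ioi T`
  have hbound2 : ∀ t ∈ Ioi T, f t ≤
      (2 * (N : ℝ)) ^ (-(1 / (2 * (N : ℝ)))) * t ^ (-(1 + 1 / (2 * (N : ℝ)))) := by
    intro t ht
    have htT : T < t := ht
    have ht0 : 0 < t := hT.trans htT
    have hεT : ε ^ (4 * N) * T = 1 := by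
      rw [hTdef, ← Real.rpow_natCast ε (4 * N), ← Real.rpow_add hε]
      push_cast
      simp
    have hge1 : (1 : ℝ) ≤ ε ^ (4 * N) * t := by
      rw [← hεT]
      exact mul_le_mul_of_nonneg_left htT.le hε4N.le
    have hpos2 : (0 : ℝ) < 2 * (N : ℝ) * ε ^ (4 * N) * t := by positivity
    have hA : (1 + 2 * (N : ℝ) * ε ^ (4 * N) * t) ^ (-(1 / (2 * (N : ℝ)))) ≤
        (2 * (N : ℝ) * ε ^ (4 * N) * t) ^ (-(1 / (2 * (N : ℝ)))) := by
      apply Real.rpow_le_rpow_of_nonpos hpos2 (by linarith) (by linarith)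
    have hsplit : (2 * (N : ℝ) * ε ^ (4 * N) * t) ^ (-(1 / (2 * (N : ℝ)))) =
        (2 * (N : ℝ)) ^ (-(1 / (2 * (N : ℝ)))) * ε ^ (-(2 : ℝ)) *
          t ^ (-(1 / (2 * (N : ℝ)))) := by
      rw [Real.mul_rpow (by positivity) ht0.le, Real.mul_rpow (by positivity) hε4N.le]
      congr 1
      congr 1
      rw [← Real.rpow_natCast ε (4 * N), ← Real.rpow_mul hε.le]
      congr 1
      push_cast
      field_simp
      ring
    have hW : ε ^ κ * (1 + ε ^ κ * t)⁻¹ ≤ t⁻¹ := by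
      have h1 : (1 + ε ^ κ * t)⁻¹ ≤ (ε ^ κ * t)⁻¹ :=
        inv_anti₀ (mul_pos hεκ ht0) (by linarith)
      calc ε ^ κ * (1 + ε ^ κ * t)⁻¹ ≤ ε ^ κ * (ε ^ κ * t)⁻¹ :=
            mul_le_mul_of_nonneg_left h1 hεκ.le
        _ = t⁻¹ := by field_simp
    have hW0 : 0 ≤ ε ^ κ * (1 + ε ^ κ * t)⁻¹ :=
      mul_nonneg hεκ.le (inv_nonneg.mpr (hden t ht0.le).le)
    have hεcancel : (ε ^ 2 : ℝ) * ε ^ (-(2 : ℝ)) = 1 := by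
      rw [← Real.rpow_natCast ε 2, ← Real.rpow_add hε]
      norm_num
    have htcomb : t ^ (-(1 / (2 * (N : ℝ)))) * t⁻¹ = t ^ (-(1 + 1 / (2 * (N : ℝ)))) := by
      rw [← Real.rpow_neg_one t, ← Real.rpow_add ht0]
      congr 1
      ring
    calc f t ≤ (ε ^ 2 * ((2 * (N : ℝ)) ^ (-(1 / (2 * (N : ℝ)))) * ε ^ (-(2 : ℝ)) *
          t ^ (-(1 / (2 * (N : ℝ)))))) * t⁻¹ := by
          refine mul_le_mul (mul_le_mul_of_nonneg_left (hsplit ▸ hA)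
            (by positivity : (0:ℝ) ≤ ε ^ 2)) hW hW0 ?_
          refine mul_nonneg (by positivity) ?_
          rw [← hsplit]
          exact Real.rpow_nonneg hpos2.le _
      _ = (2 * (N : ℝ)) ^ (-(1 / (2 * (N : ℝ)))) *
            ((ε ^ 2 * ε ^ (-(2 : ℝ))) * (t ^ (-(1 / (2 * (N : ℝ)))) * t⁻¹)) := by ring
      _ = (2 * (N : ℝ)) ^ (-(1 / (2 * (N : ℝ)))) * t ^ (-(1 + 1 / (2 * (N : ℝ)))) := by
          rw [hεcancel, htcomb, one_mul]
  -- integrability of `f` on the two pieces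
  have hfInt1 : IntegrableOn f (Ioc 0 T) := by
    have h1 : IntegrableOn f (Icc 0 T) :=
      (hcont.mono (Icc_subset_Ici_self : Icc (0:ℝ) T ⊆ Ici 0)).integrableOn_Icc
    exact h1.mono_set Ioc_subset_Icc_self
  have hg2Int : IntegrableOn (fun t : ℝ => t ^ (-(1 + 1 / (2 * (N : ℝ))))) (Ioi T) :=
    integrableOn_Ioi_rpow_of_lt (by linarith) hT
  have hg2Int' : IntegrableOn
      (fun t : ℝ => (2 * (N : ℝ)) ^ (-(1 / (2 * (N : ℝ)))) * t ^ (-(1 + 1 / (2 * (N : ℝ)))))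
      (Ioi T) := Integrable.const_mul hg2Int _
  have hfInt2 : IntegrableOn f (Ioi T) := by
    apply Integrable.mono' hg2Int'
    · exact (hcont.mono fun t ht => le_of_lt (hT.trans ht)).aestronglyMeasurable
        measurableSet_Ioi
    · filter_upwards [ae_restrict_mem measurableSet_Ioi] with t ht
      rw [Real.norm_eq_abs, abs_of_nonneg (hf_nonneg t (hT.trans ht).le)]
      exact hbound2 t ht
  -- first piece
  have hg1Int : IntegrableOn (fun t : ℝ => ε ^ ((2 : ℝ) + κ * δ) * t ^ (δ - 1)) (Ioc 0 T) :=
    ((intervalIntegral.intervalIntegrable_rpow' (by linarith)).const_mul _).1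
  have hI1 : ∫ t in Ioc (0 : ℝ) T, f t ≤ (4 * (N : ℝ) + 1) * ε := by
    calc ∫ t in Ioc (0 : ℝ) T, f t
        ≤ ∫ t in Ioc (0 : ℝ) T, ε ^ ((2 : ℝ) + κ * δ) * t ^ (δ - 1) :=
          setIntegral_mono_on hfInt1 hg1Int measurableSet_Ioc hbound1
      _ = ε ^ ((2 : ℝ) + κ * δ) * ∫ t in Ioc (0 : ℝ) T, t ^ (δ - 1) := integral_const_mul _ _
      _ = ε ^ ((2 : ℝ) + κ * δ) * (T ^ δ / δ) := by
          rw [← intervalIntegral.integral_of_le hT.le, integral_rpow (Or.inl (by linarith))]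
          have h1 : δ - 1 + 1 = δ := by ring
          rw [h1, Real.zero_rpow hδ.ne']
          ring
      _ ≤ (4 * (N : ℝ) + 1) * ε := by
          have hTδ : T ^ δ = ε ^ (-(4 * (N : ℝ)) * δ) := by
            rw [hTdef, ← Real.rpow_mul hε.le]
          have hcomb : ε ^ ((2 : ℝ) + κ * δ) * T ^ δ = ε ^ ((2 : ℝ) + κ * δ + -(4 * (N : ℝ)) * δ) := by
            rw [hTδ, ← Real.rpow_add hε]
          have hexp : (1 : ℝ) ≤ (2 : ℝ) + κ * δ + -(4 * (N : ℝ)) * δ := by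
            have : 0 ≤ κ * δ := by positivity
            linarith
          have hle : ε ^ ((2 : ℝ) + κ * δ + -(4 * (N : ℝ)) * δ) ≤ ε := by
            calc ε ^ ((2 : ℝ) + κ * δ + -(4 * (N : ℝ)) * δ) ≤ ε ^ (1 : ℝ) :=
                  Real.rpow_le_rpow_of_exponent_ge hε hε1 hexp
              _ = ε := Real.rpow_one ε
          calc ε ^ ((2 : ℝ) + κ * δ) * (T ^ δ / δ)
              = ε ^ ((2 : ℝ) + κ * δ + -(4 * (N : ℝ)) * δ) / δ := by rw [← hcomb]; ring
            _ ≤ ε / δ := by gcongr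
            _ = (4 * (N : ℝ) + 1) * ε := by
                rw [hδdef]; field_simp
  -- second piece
  have hI2 : ∫ t in Ioi T, f t ≤ 2 * (N : ℝ) * ε := by
    have hcN : (2 * (N : ℝ)) ^ (-(1 / (2 * (N : ℝ)))) ≤ 1 :=
      Real.rpow_le_one_of_one_le_of_nonpos (by linarith) (by linarith)
    have hcN0 : (0 : ℝ) ≤ (2 * (N : ℝ)) ^ (-(1 / (2 * (N : ℝ)))) :=
      Real.rpow_nonneg (by positivity) _
    have hval : ∫ t in Ioi T, t ^ (-(1 + 1 / (2 * (N : ℝ)))) = 2 * (N : ℝ) * T ^ (-(1 / (2 * (N : ℝ)))) := by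
      rw [integral_Ioi_rpow_of_lt (by linarith) hT]
      have h1 : -(1 + 1 / (2 * (N : ℝ))) + 1 = -(1 / (2 * (N : ℝ))) := by ring
      rw [h1]
      field_simp
    have hTval : T ^ (-(1 / (2 * (N : ℝ)))) = ε ^ (2 : ℝ) := by
      rw [hTdef, ← Real.rpow_mul hε.le]
      congr 1
      field_simp
      ring
    have hε2le : ε ^ (2 : ℝ) ≤ ε := by
      calc ε ^ (2 : ℝ) ≤ ε ^ (1 : ℝ) :=
            Real.rpow_le_rpow_of_exponent_ge hε hε1 (by norm_num)
        _ = ε := Real.rpow_one ε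
    calc ∫ t in Ioi T, f t
        ≤ ∫ t in Ioi T, (2 * (N : ℝ)) ^ (-(1 / (2 * (N : ℝ)))) * t ^ (-(1 + 1 / (2 * (N : ℝ)))) :=
          setIntegral_mono_on hfInt2 hg2Int' measurableSet_Ioi hbound2
      _ = (2 * (N : ℝ)) ^ (-(1 / (2 * (N : ℝ)))) * (2 * (N : ℝ) * T ^ (-(1 / (2 * (N : ℝ))))) := by
          rw [integral_const_mul, hval]
      _ ≤ 1 * (2 * (N : ℝ) * ε) := by
          apply mul_le_mul hcN _ _ zero_le_one
          · rw [hTval]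
            exact mul_le_mul_of_nonneg_left hε2le (by positivity)
          · rw [hTval]
            positivity
      _ = 2 * (N : ℝ) * ε := one_mul _
  -- assemble
  have hsplit : ∫ t in Ioi (0 : ℝ), f t = (∫ t in Ioc (0 : ℝ) T, f t) + ∫ t in Ioi T, f t := by
    rw [← Ioc_union_Ioi_eq_Ioi hT.le,
      setIntegral_union (Ioc_disjoint_Ioi le_rfl) measurableSet_Ioi hfInt1 hfInt2]
  calc ∫ t in Ioi (0 : ℝ), f t
      = (∫ t in Ioc (0 : ℝ) T, f t) + ∫ t in Ioi T, f t := hsplit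
    _ ≤ (4 * (N : ℝ) + 1) * ε + 2 * (N : ℝ) * ε := add_le_add hI1 hI2
    _ = (6 * (N : ℝ) + 1) * ε := by ring
end

section
/- Let b > 1 and 0 < γ ≤ b be real numbers. There exists a constant C > 0, depending only on b and γ, such that for every c ∈ (0,1] and every t ≥ 0: ∫_0^t (1 + t − s)^{−b} (1 + c s)^{−γ} ds ≤ C (1 + c t)^{−γ}. -/
open intervalIntegral

lemma conv_contOn_mul (c e A B : ℝ) (hc : 0 ≤ c) (hA : 0 ≤ A) :
    ContinuousOn (fun s : ℝ => (1 + c * s) ^ e) (Set.Icc A B) := by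
  apply ContinuousOn.rpow_const
  · exact (continuous_const.add (continuous_const.mul continuous_id)).continuousOn
  · intro s hs
    have h1 : 0 ≤ c * s := mul_nonneg hc (hA.trans hs.1)
    exact Or.inl (by positivity : (0:ℝ) < 1 + c * s).ne'

lemma conv_contOn_shift (t e A B : ℝ) (hB : B ≤ t) :
    ContinuousOn (fun s : ℝ => (1 + t - s) ^ e) (Set.Icc A B) := by
  apply ContinuousOn.rpow_const
  · exact (continuous_const.sub continuous_id).continuousOn
  · intro s hs
    exact Or.inl (by have := hs.2; intro h; nlinarith : (1 + t - s) ≠ 0)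

lemma conv_ii_mul (c e A B : ℝ) (hc : 0 ≤ c) (hA : 0 ≤ A) (hAB : A ≤ B) :
    IntervalIntegrable (fun s : ℝ => (1 + c * s) ^ e) MeasureTheory.volume A B := by
  apply ContinuousOn.intervalIntegrable
  rw [Set.uIcc_of_le hAB]
  exact conv_contOn_mul c e A B hc hA

lemma conv_ii_shift (t e A B : ℝ) (hB : B ≤ t) (hAB : A ≤ B) :
    IntervalIntegrable (fun s : ℝ => (1 + t - s) ^ e) MeasureTheory.volume A B := by
  apply ContinuousOn.intervalIntegrable
  rw [Set.uIcc_of_le hAB]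
  exact conv_contOn_shift t e A B hB

lemma conv_ii_prod (b γ c t A B : ℝ) (hc : 0 ≤ c) (hA : 0 ≤ A) (hAB : A ≤ B) (hB : B ≤ t) :
    IntervalIntegrable (fun s : ℝ => (1 + t - s) ^ (-b) * (1 + c * s) ^ (-γ))
      MeasureTheory.volume A B := by
  apply ContinuousOn.intervalIntegrable
  rw [Set.uIcc_of_le hAB]
  exact (conv_contOn_shift t (-b) A B hB).mul (conv_contOn_mul c (-γ) A B hc hA)

lemma conv_int_bound_mul (p : ℝ) (hp : p < -1) {c A B : ℝ} (hc : 0 < c)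
    (hA : 0 ≤ A) (hAB : A ≤ B) :
    (∫ s in A..B, (1 + c * s) ^ p) ≤ 1 / (c * (-p - 1)) := by
  have hp1 : p + 1 < 0 := by linarith
  have hpos : ∀ s ∈ Set.uIcc A B, (0:ℝ) < 1 + c * s := by
    intro s hs
    rw [Set.uIcc_of_le hAB] at hs
    nlinarith [hs.1, hc.le, mul_nonneg hc.le (hA.trans hs.1)]
  have heq : (∫ s in A..B, (1 + c * s) ^ p)
      = (1 + c * B) ^ (p+1) / (c * (p+1)) - (1 + c * A) ^ (p+1) / (c * (p+1)) := by
    apply integral_eq_sub_of_hasDerivAt (f := fun s => (1 + c * s) ^ (p+1) / (c * (p+1)))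
    · intro s hs
      have h0 : (1 + c * s) ≠ 0 := (hpos s hs).ne'
      have d1 : HasDerivAt (fun s : ℝ => 1 + c * s) c s := by
        simpa using ((hasDerivAt_id s).const_mul c).const_add 1
      have d2 : HasDerivAt (fun x : ℝ => x ^ (p+1)) ((p+1) * (1 + c*s) ^ (p+1-1)) (1 + c*s) :=
        Real.hasDerivAt_rpow_const (Or.inl h0)
      have d3 := (d2.comp s d1).div_const (c * (p+1))
      have hval : (p+1) * (1 + c*s) ^ (p+1-1) * c / (c * (p+1)) = (1 + c*s) ^ p := by
        rw [show p + 1 - 1 = p by ring]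
        have hc' : c ≠ 0 := hc.ne'
        have hp1' : p + 1 ≠ 0 := hp1.ne
        field_simp
      rw [← hval]
      exact d3
    · apply ContinuousOn.intervalIntegrable
      rw [Set.uIcc_of_le hAB]
      exact conv_contOn_mul c p A B hc.le hA
  rw [heq]
  have h1 : (0:ℝ) ≤ (1 + c * B) ^ (p+1) :=
    Real.rpow_nonneg (hpos B (by rw [Set.uIcc_of_le hAB]; exact Set.right_mem_Icc.2 hAB)).le _
  have h2 : (1 + c * A) ^ (p+1) ≤ 1 :=
    Real.rpow_le_one_of_one_le_of_nonpos (by nlinarith [mul_nonneg hc.le hA]) hp1.le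
  have hd : 0 < c * (-p - 1) := mul_pos hc (by linarith)
  have key : (1 + c * B) ^ (p+1) / (c * (p+1)) - (1 + c * A) ^ (p+1) / (c * (p+1))
      = ((1 + c * A) ^ (p+1) - (1 + c * B) ^ (p+1)) / (c * (-p - 1)) := by
    rw [div_sub_div_same, div_eq_div_iff (by nlinarith) hd.ne']
    ring
  rw [key]
  exact (div_le_div_iff_of_pos_right hd).mpr (by linarith)


lemma conv_int_bound_shift (q : ℝ) (hq : q < -1) {t A B : ℝ} (hA : 0 ≤ A) (hAB : A ≤ B)
    (hB : B ≤ t) :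
    (∫ s in A..B, (1 + t - s) ^ q) ≤ 1 / (-q - 1) := by
  have hfun : (fun s : ℝ => (1 + t - s) ^ q)
      = (fun s => (fun u : ℝ => (1 + 1 * u) ^ q) (t - s)) := by
    funext s; congr 1; ring
  rw [show (∫ s in A..B, (1 + t - s) ^ q)
      = ∫ s in A..B, (fun u : ℝ => (1 + 1 * u) ^ q) (t - s) by rw [← hfun],
    integral_comp_sub_left (fun u : ℝ => (1 + 1 * u) ^ q) t]
  have := conv_int_bound_mul q hq (c := 1) one_pos (A := t - B) (B := t - A)
    (by linarith) (by linarith)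
  simpa using this

lemma conv_helper1 {A B K γ : ℝ} (hA : 0 < A) (hB : 0 < B) (hK : 0 < K) (hγ : 0 ≤ γ)
    (h : B ≤ K * A) : A ^ (-γ) ≤ K ^ γ * B ^ (-γ) := by
  have h1 : (K * A) ^ (-γ) ≤ B ^ (-γ) :=
    Real.rpow_le_rpow_of_nonpos hB h (by linarith)
  have h2 : (K * A) ^ (-γ) = K ^ (-γ) * A ^ (-γ) := Real.mul_rpow hK.le hA.le
  have h3 : K ^ γ * (K ^ (-γ) * A ^ (-γ)) ≤ K ^ γ * B ^ (-γ) :=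
    mul_le_mul_of_nonneg_left (h2 ▸ h1) (Real.rpow_nonneg hK.le _)
  have h4 : K ^ γ * K ^ (-γ) = 1 := by
    rw [← Real.rpow_add hK]; simp
  calc A ^ (-γ) = K ^ γ * K ^ (-γ) * A ^ (-γ) := by rw [h4, one_mul]
    _ = K ^ γ * (K ^ (-γ) * A ^ (-γ)) := by ring
    _ ≤ K ^ γ * B ^ (-γ) := h3

set_option maxHeartbeats 1000000 in
/-- the weighted convolution estimate
`∫_0^t (1+t-s)^{-b} (1+cs)^{-γ} ds ≤ C (1+ct)^{-γ}` for `b > 1`, `0 < γ ≤ b`,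
uniformly for `c ∈ (0,1]` and `t ≥ 0`. -/
theorem convolution_weighted_decay
    (b γ : ℝ) (hb : 1 < b) (hγ0 : 0 < γ) (hγb : γ ≤ b) :
    ∃ C > (0 : ℝ), ∀ c : ℝ, 0 < c → c ≤ 1 → ∀ t : ℝ, 0 ≤ t →
      (∫ s in (0 : ℝ)..t, (1 + t - s) ^ (-b) * (1 + c * s) ^ (-γ)) ≤
        C * (1 + c * t) ^ (-γ) := by
  have hb1 : (0:ℝ) < b - 1 := by linarith
  set D : ℝ := 1 / (b - 1) with hD
  have hD0 : 0 < D := by positivity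
  have hE0 : (0:ℝ) < (2:ℝ) ^ γ := Real.rpow_pos_of_pos two_pos γ
  have hF0 : (0:ℝ) < (4:ℝ) ^ b := Real.rpow_pos_of_pos (by norm_num) b
  refine ⟨(2 * (2:ℝ) ^ γ + (4:ℝ) ^ b) * (D + 1), by positivity, ?_⟩
  intro c hc hc1 t ht
  have hct : (0:ℝ) < 1 + c * t := by nlinarith
  set P : ℝ := (1 + c * t) ^ (-γ) with hPdef
  have hP : 0 < P := Real.rpow_pos_of_pos hct _
  have hbneg : -b < -1 := by linarith
  have hsb : -(-b) - 1 = b - 1 := by ring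
  by_cases hsm : c * t ≤ 1
  · -- small-time case
    have h1 : (∫ s in (0:ℝ)..t, (1 + t - s) ^ (-b) * (1 + c * s) ^ (-γ))
        ≤ ∫ s in (0:ℝ)..t, (1 + t - s) ^ (-b) := by
      apply integral_mono_on ht (conv_ii_prod b γ c t 0 t hc.le le_rfl ht le_rfl)
        (conv_ii_shift t (-b) 0 t le_rfl ht)
      intro s hs
      have hb1s : (0:ℝ) < 1 + t - s := by nlinarith [hs.2]
      have h2 : (1 + c * s) ^ (-γ) ≤ 1 :=
        Real.rpow_le_one_of_one_le_of_nonpos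
          (by nlinarith [mul_nonneg hc.le hs.1]) (by linarith)
      calc (1 + t - s) ^ (-b) * (1 + c * s) ^ (-γ)
          ≤ (1 + t - s) ^ (-b) * 1 :=
            mul_le_mul_of_nonneg_left h2 (Real.rpow_nonneg hb1s.le _)
        _ = (1 + t - s) ^ (-b) := mul_one _
    have h2 : (∫ s in (0:ℝ)..t, (1 + t - s) ^ (-b)) ≤ 1 / (b - 1) := by
      have := conv_int_bound_shift (-b) hbneg (t := t) le_rfl ht le_rfl
      rwa [hsb] at this
    have hQP : (2:ℝ) ^ (-γ) ≤ P := by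
      apply Real.rpow_le_rpow_of_nonpos hct (by linarith) (by linarith)
    have hEQ : (2:ℝ) ^ γ * (2:ℝ) ^ (-γ) = 1 := by
      rw [← Real.rpow_add two_pos]; simp
    have hQ0 : (0:ℝ) < (2:ℝ) ^ (-γ) := Real.rpow_pos_of_pos two_pos _
    have : 1 / (b - 1) ≤ (2 * (2:ℝ) ^ γ + (4:ℝ) ^ b) * (D + 1) * P := by
      rw [← hD]
      nlinarith [mul_le_mul_of_nonneg_left hQP (le_of_lt (mul_pos hE0 hD0)),
        mul_pos hF0 hD0, mul_pos hF0 hP, mul_pos hE0 hP, mul_pos hE0 hQ0]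
    linarith
  · -- large-time case
    push_neg at hsm
    set m : ℝ := t / 2 with hm
    have hm0 : 0 ≤ m := by positivity
    have hmt : m ≤ t := by linarith
    have ht0 : 0 < t := by nlinarith
    have hsplit : (∫ s in (0:ℝ)..t, (1 + t - s) ^ (-b) * (1 + c * s) ^ (-γ))
        = (∫ s in (0:ℝ)..m, (1 + t - s) ^ (-b) * (1 + c * s) ^ (-γ))
          + ∫ s in m..t, (1 + t - s) ^ (-b) * (1 + c * s) ^ (-γ) :=
      (integral_add_adjacent_intervals
        (conv_ii_prod b γ c t 0 m hc.le le_rfl hm0 hmt)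
        (conv_ii_prod b γ c t m t hc.le hm0 hmt le_rfl)).symm
    -- I₂ bound
    have hcm : (0:ℝ) < 1 + c * m := by nlinarith
    have hKm : (1 + c * m) ^ (-γ) ≤ (2:ℝ) ^ γ * P := by
      apply conv_helper1 hcm hct two_pos hγ0.le
      nlinarith
    have hI2 : (∫ s in m..t, (1 + t - s) ^ (-b) * (1 + c * s) ^ (-γ))
        ≤ (2:ℝ) ^ γ * P * D := by
      have step1 : (∫ s in m..t, (1 + t - s) ^ (-b) * (1 + c * s) ^ (-γ))
          ≤ ∫ s in m..t, ((2:ℝ) ^ γ * P) * (1 + t - s) ^ (-b) := by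
        apply integral_mono_on hmt (conv_ii_prod b γ c t m t hc.le hm0 hmt le_rfl)
          ((conv_ii_shift t (-b) m t le_rfl hmt).const_mul _)
        intro s hs
        have hb1s : (0:ℝ) < 1 + t - s := by nlinarith [hs.2]
        have hcs : (0:ℝ) < 1 + c * s := by nlinarith [mul_nonneg hc.le (hm0.trans hs.1)]
        have h3 : (1 + c * s) ^ (-γ) ≤ (1 + c * m) ^ (-γ) := by
          apply Real.rpow_le_rpow_of_nonpos hcm (by nlinarith [hs.1]) (by linarith)
        calc (1 + t - s) ^ (-b) * (1 + c * s) ^ (-γ)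
            ≤ (1 + t - s) ^ (-b) * ((2:ℝ) ^ γ * P) :=
              mul_le_mul_of_nonneg_left (h3.trans hKm) (Real.rpow_nonneg hb1s.le _)
          _ = ((2:ℝ) ^ γ * P) * (1 + t - s) ^ (-b) := by ring
      have step2 : (∫ s in m..t, ((2:ℝ) ^ γ * P) * (1 + t - s) ^ (-b))
          = ((2:ℝ) ^ γ * P) * ∫ s in m..t, (1 + t - s) ^ (-b) := integral_const_mul _ _
      have step3 : (∫ s in m..t, (1 + t - s) ^ (-b)) ≤ D := by
        have := conv_int_bound_shift (-b) hbneg (t := t) hm0 hmt le_rfl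
        rwa [hsb] at this
      calc (∫ s in m..t, (1 + t - s) ^ (-b) * (1 + c * s) ^ (-γ))
          ≤ ((2:ℝ) ^ γ * P) * ∫ s in m..t, (1 + t - s) ^ (-b) := step2 ▸ step1
        _ ≤ ((2:ℝ) ^ γ * P) * D :=
            mul_le_mul_of_nonneg_left step3 (by positivity)
        _ = (2:ℝ) ^ γ * P * D := by ring
    -- I₁ bound
    have hm1 : (0:ℝ) < 1 + m := by linarith
    set K₁ : ℝ := (1 + m) ^ (-b) * (1 + c * t) ^ (b - γ) with hK₁
    have hK₁0 : 0 < K₁ := mul_pos (Real.rpow_pos_of_pos hm1 _) (Real.rpow_pos_of_pos hct _)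
    have hI1 : (∫ s in (0:ℝ)..m, (1 + t - s) ^ (-b) * (1 + c * s) ^ (-γ))
        ≤ K₁ * (1 / (c * (b - 1))) := by
      have step1 : (∫ s in (0:ℝ)..m, (1 + t - s) ^ (-b) * (1 + c * s) ^ (-γ))
          ≤ ∫ s in (0:ℝ)..m, K₁ * (1 + c * s) ^ (-b) := by
        apply integral_mono_on hm0 (conv_ii_prod b γ c t 0 m hc.le le_rfl hm0 hmt)
          ((conv_ii_mul c (-b) 0 m hc.le le_rfl hm0).const_mul _)
        intro s hs
        have hcs : (0:ℝ) < 1 + c * s := by nlinarith [mul_nonneg hc.le hs.1]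
        have hb1s : (0:ℝ) < 1 + t - s := by nlinarith [hs.2]
        have f1 : (1 + t - s) ^ (-b) ≤ (1 + m) ^ (-b) := by
          apply Real.rpow_le_rpow_of_nonpos hm1 (by linarith [hs.2])
            (by linarith)
        have f2 : (1 + c * s) ^ (-γ) ≤ (1 + c * t) ^ (b - γ) * (1 + c * s) ^ (-b) := by
          have g1 : (1 + c * s) ^ (b - γ) ≤ (1 + c * t) ^ (b - γ) := by
            apply Real.rpow_le_rpow hcs.le ?_ (by linarith)
            have : s ≤ t := le_trans hs.2 hmt
            nlinarith
          have g2 : (1 + c * s) ^ (b - γ) * (1 + c * s) ^ (-b) = (1 + c * s) ^ (-γ) := by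
            rw [← Real.rpow_add hcs]; congr 1; ring
          calc (1 + c * s) ^ (-γ) = (1 + c * s) ^ (b - γ) * (1 + c * s) ^ (-b) := g2.symm
            _ ≤ (1 + c * t) ^ (b - γ) * (1 + c * s) ^ (-b) :=
              mul_le_mul_of_nonneg_right g1 (Real.rpow_nonneg hcs.le _)
        calc (1 + t - s) ^ (-b) * (1 + c * s) ^ (-γ)
            ≤ (1 + m) ^ (-b) * ((1 + c * t) ^ (b - γ) * (1 + c * s) ^ (-b)) := by
              apply mul_le_mul f1 f2 (Real.rpow_nonneg hcs.le _) (Real.rpow_nonneg hm1.le _)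
          _ = K₁ * (1 + c * s) ^ (-b) := by rw [hK₁]; ring
      have step2 : (∫ s in (0:ℝ)..m, K₁ * (1 + c * s) ^ (-b))
          = K₁ * ∫ s in (0:ℝ)..m, (1 + c * s) ^ (-b) := integral_const_mul _ _
      have step3 : (∫ s in (0:ℝ)..m, (1 + c * s) ^ (-b)) ≤ 1 / (c * (b - 1)) := by
        have := conv_int_bound_mul (-b) hbneg hc le_rfl hm0
        rwa [hsb] at this
      calc (∫ s in (0:ℝ)..m, (1 + t - s) ^ (-b) * (1 + c * s) ^ (-γ))
          ≤ K₁ * ∫ s in (0:ℝ)..m, (1 + c * s) ^ (-b) := step2 ▸ step1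
        _ ≤ K₁ * (1 / (c * (b - 1))) := mul_le_mul_of_nonneg_left step3 hK₁0.le
    -- endgame for I₁
    have hS1 : (1 + c * t) ^ b * (1 + m) ^ (-b) ≤ (4:ℝ) ^ b * c := by
      have base : 1 + c * t ≤ 4 * c * (1 + m) := by nlinarith
      have g1 : (1 + c * t) ^ b ≤ (4 * c * (1 + m)) ^ b :=
        Real.rpow_le_rpow hct.le base (by linarith)
      have g2 : (4 * c * (1 + m)) ^ b = (4:ℝ) ^ b * c ^ b * (1 + m) ^ b := by
        rw [Real.mul_rpow (by positivity) hm1.le, Real.mul_rpow (by norm_num) hc.le]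
      have g3 : c ^ b ≤ c := by
        have := Real.rpow_le_rpow_of_exponent_ge hc hc1 (le_of_lt hb)
        rwa [Real.rpow_one] at this
      have g4 : (1 + m) ^ b * (1 + m) ^ (-b) = 1 := by
        rw [← Real.rpow_add hm1]; simp
      have g5 : (1 + c * t) ^ b * (1 + m) ^ (-b) ≤ (4:ℝ) ^ b * c ^ b * ((1 + m) ^ b * (1 + m) ^ (-b)) := by
        calc (1 + c * t) ^ b * (1 + m) ^ (-b)
            ≤ (4:ℝ) ^ b * c ^ b * (1 + m) ^ b * (1 + m) ^ (-b) := by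
              apply mul_le_mul_of_nonneg_right (g2 ▸ g1) (Real.rpow_nonneg hm1.le _)
          _ = (4:ℝ) ^ b * c ^ b * ((1 + m) ^ b * (1 + m) ^ (-b)) := by ring
      rw [g4, mul_one] at g5
      calc (1 + c * t) ^ b * (1 + m) ^ (-b) ≤ (4:ℝ) ^ b * c ^ b := g5
        _ ≤ (4:ℝ) ^ b * c := mul_le_mul_of_nonneg_left g3 hF0.le
    have hKP : K₁ * (1 / (c * (b - 1))) ≤ (4:ℝ) ^ b * D * P := by
      have hsplitexp : (1 + c * t) ^ (b - γ) = (1 + c * t) ^ b * P := by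
        rw [hPdef, ← Real.rpow_add hct, sub_eq_add_neg]
      have h6 := mul_le_mul_of_nonneg_right hS1 (le_of_lt (by positivity : 0 < P / (c * (b - 1))))
      calc K₁ * (1 / (c * (b - 1)))
          = ((1 + c * t) ^ b * (1 + m) ^ (-b)) * (P / (c * (b - 1))) := by
            rw [hK₁, hsplitexp]; ring
        _ ≤ ((4:ℝ) ^ b * c) * (P / (c * (b - 1))) := h6
        _ = (4:ℝ) ^ b * D * P := by
            rw [hD]; field_simp
    rw [hsplit]
    have final : (2:ℝ) ^ γ * P * D + (4:ℝ) ^ b * D * P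
        ≤ (2 * (2:ℝ) ^ γ + (4:ℝ) ^ b) * (D + 1) * P := by
      nlinarith [mul_pos hE0 hP, mul_pos hF0 hP, mul_pos (mul_pos hE0 hP) hD0,
        mul_pos (mul_pos hF0 hP) hD0]
    linarith [hI1.trans hKP, hI2]
end

section
/- Let N ≥ 1 be an integer, κ ∈ (0, 8], and δ ∈ (0, 1/2). There exists a constant C > 0, depending only on N, κ and δ, such that for every ε ∈ (0,1]: ∫_0^∞ [ ε^{2−δ} Y(s)^{1/2} W(s)^{3/2} + ε³ (1+s)^{−9/8} Y(s)^{1/2} W(s)^{1/2} + ε⁷ (1+s)^{−9/4} ] ds ≤ C ε^{3 + κ/2 − 2δ}, where Y(s) = ε² (1 + 2N ε^{4N} s)^{−1/(2N)} and W(s) = ε^κ (1 + ε^κ s)^{−1}. -/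
open MeasureTheory

open Set Real Filter Topology

lemma aux_intgr {a p : ℝ} (ha : 0 < a) (hp : p < -1) :
    IntegrableOn (fun s => (1 + a * s) ^ p) (Set.Ioi (0:ℝ)) ∧
    ∫ s in Set.Ioi (0:ℝ), (1 + a * s) ^ p = -1 / (a * (p + 1)) := by
  have hp1 : p + 1 < 0 := by linarith
  have hap : a * (p + 1) ≠ 0 := by
    have : a * (p + 1) < 0 := mul_neg_of_pos_of_neg ha hp1
    exact this.ne
  set g : ℝ → ℝ := fun x => (1 + a * x) ^ (p + 1) / (a * (p + 1)) with hg
  have hderiv : ∀ x ∈ Set.Ici (0:ℝ), HasDerivAt g ((1 + a * x) ^ p) x := by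
    intro x hx
    have h1 : (0:ℝ) < 1 + a * x := by
      have : 0 ≤ a * x := mul_nonneg ha.le hx
      linarith
    have h2 : HasDerivAt (fun x : ℝ => 1 + a * x) a x := by
      simpa using ((hasDerivAt_id x).const_mul a).const_add 1
    have h3 := (Real.hasDerivAt_rpow_const (x := 1 + a * x) (p := p + 1)
      (Or.inl h1.ne')).comp x h2
    have h4 := h3.div_const (a * (p + 1))
    refine h4.congr_deriv ?_
    rw [show p + 1 - 1 = p by ring]
    field_simp [hp1.ne]
  have hpos : ∀ x ∈ Set.Ioi (0:ℝ), 0 ≤ (1 + a * x) ^ p := by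
    intro x hx
    have h1 : (0:ℝ) < 1 + a * x := by nlinarith [mem_Ioi.mp hx]
    positivity
  have htop : Tendsto g atTop (𝓝 0) := by
    have h1 : Tendsto (fun x : ℝ => 1 + a * x) atTop atTop :=
      tendsto_atTop_add_const_left _ _ (tendsto_id.const_mul_atTop ha)
    have h2 : Tendsto (fun y : ℝ => y ^ (p + 1)) atTop (𝓝 0) := by
      have := tendsto_rpow_neg_atTop (y := -(p + 1)) (by linarith)
      simpa using this
    have := (h2.comp h1).div_const (a * (p + 1))
    simpa [hg, zero_div] using this
  refine ⟨integrableOn_Ioi_deriv_of_nonneg' hderiv hpos htop, ?_⟩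
  rw [integral_Ioi_of_hasDerivAt_of_nonneg' hderiv hpos htop]
  simp [hg]
  rw [← mul_inv]
  ring


set_option maxHeartbeats 1600000 in
/-- with `Y(s) = ε²(1+2Nε^{4N}s)^{-1/(2N)}` and
`W(s) = ε^κ(1+ε^κ s)^{-1}`, the error-term integral
`∫_0^∞ (ε^{2-δ} Y^{1/2} W^{3/2} + ε³ (1+s)^{-9/8} Y^{1/2} W^{1/2} + ε⁷ (1+s)^{-9/4}) ds`
is bounded by `C ε^{3+κ/2-2δ}` uniformly for `ε ∈ (0,1]`. -/
theorem integral_error_terms_le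
    (N : ℕ) (hN : 1 ≤ N) (κ : ℝ) (hκ0 : 0 < κ) (hκ8 : κ ≤ 8)
    (δ : ℝ) (hδ0 : 0 < δ) (hδ : δ < 1 / 2) :
    ∃ C > (0 : ℝ), ∀ ε : ℝ, 0 < ε → ε ≤ 1 →
      ∫ s in Set.Ioi (0 : ℝ),
          (ε ^ (2 - δ) *
              (ε ^ 2 * (1 + 2 * (N : ℝ) * ε ^ (4 * N) * s) ^
                  (-(1 / (2 * (N : ℝ))))) ^ ((1 : ℝ) / 2) *
              (ε ^ κ * (1 + ε ^ κ * s)⁻¹) ^ ((3 : ℝ) / 2) +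
            ε ^ 3 * (1 + s) ^ (-(9 / 8 : ℝ)) *
              (ε ^ 2 * (1 + 2 * (N : ℝ) * ε ^ (4 * N) * s) ^
                  (-(1 / (2 * (N : ℝ))))) ^ ((1 : ℝ) / 2) *
              (ε ^ κ * (1 + ε ^ κ * s)⁻¹) ^ ((1 : ℝ) / 2) +
            ε ^ 7 * (1 + s) ^ (-(9 / 4 : ℝ))) ≤
        C * ε ^ (3 + κ / 2 - 2 * δ) := by
  refine ⟨11, by norm_num, fun ε hε hε1 => ?_⟩
  have hεk : (0:ℝ) < ε ^ κ := Real.rpow_pos_of_pos hε κ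
  -- the three constants
  set C1 : ℝ := ε ^ (2 - δ) * ε * (ε ^ κ) ^ ((3:ℝ)/2) with hC1
  set C2 : ℝ := ε ^ 3 * ε * (ε ^ κ) ^ ((1:ℝ)/2) with hC2
  set C3 : ℝ := ε ^ 7 with hC3
  have hC1p : 0 < C1 := by positivity
  have hC2p : 0 < C2 := by positivity
  have hC3p : 0 < C3 := by positivity
  -- the dominating function
  set h : ℝ → ℝ := fun s => C1 * (1 + ε ^ κ * s) ^ (-(3/2 : ℝ)) +
      (C2 * (1 + s) ^ (-(9/8 : ℝ)) + C3 * (1 + s) ^ (-(9/4 : ℝ))) with hh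
  have I1 := aux_intgr (a := ε ^ κ) (p := -(3/2 : ℝ)) hεk (by norm_num)
  have I2 := aux_intgr (a := 1) (p := -(9/8 : ℝ)) one_pos (by norm_num)
  have I3 := aux_intgr (a := 1) (p := -(9/4 : ℝ)) one_pos (by norm_num)
  simp only [one_mul] at I2 I3
  have hint : IntegrableOn h (Set.Ioi (0:ℝ)) := by
    exact ((I1.1.const_mul C1).add ((I2.1.const_mul C2).add (I3.1.const_mul C3)))
  -- pointwise bound
  have hbound : ∀ s ∈ Set.Ioi (0:ℝ),
      (ε ^ (2 - δ) *
              (ε ^ 2 * (1 + 2 * (N : ℝ) * ε ^ (4 * N) * s) ^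
                  (-(1 / (2 * (N : ℝ))))) ^ ((1 : ℝ) / 2) *
              (ε ^ κ * (1 + ε ^ κ * s)⁻¹) ^ ((3 : ℝ) / 2) +
            ε ^ 3 * (1 + s) ^ (-(9 / 8 : ℝ)) *
              (ε ^ 2 * (1 + 2 * (N : ℝ) * ε ^ (4 * N) * s) ^
                  (-(1 / (2 * (N : ℝ))))) ^ ((1 : ℝ) / 2) *
              (ε ^ κ * (1 + ε ^ κ * s)⁻¹) ^ ((1 : ℝ) / 2) +
            ε ^ 7 * (1 + s) ^ (-(9 / 4 : ℝ))) ≤ h s := by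
    intro s hs
    have hs0 : (0:ℝ) < s := hs
    have hA : (1:ℝ) ≤ 1 + 2 * (N : ℝ) * ε ^ (4 * N) * s := by
      nlinarith [mul_nonneg (mul_nonneg (mul_nonneg (by norm_num : (0:ℝ) ≤ 2)
        (Nat.cast_nonneg N)) (pow_nonneg hε.le (4 * N))) hs0.le]
    have hApos : (0:ℝ) < 1 + 2 * (N : ℝ) * ε ^ (4 * N) * s := lt_of_lt_of_le one_pos hA
    have hB : (0:ℝ) < 1 + ε ^ κ * s := by nlinarith
    have hB1 : (1:ℝ) ≤ 1 + ε ^ κ * s := by nlinarith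
    -- Y^{1/2} ≤ ε
    have hY : (ε ^ 2 * (1 + 2 * (N : ℝ) * ε ^ (4 * N) * s) ^
        (-(1 / (2 * (N : ℝ))))) ^ ((1 : ℝ) / 2) ≤ ε := by
      have h1 : (1 + 2 * (N : ℝ) * ε ^ (4 * N) * s) ^ (-(1 / (2 * (N : ℝ)))) ≤ 1 := by
        apply Real.rpow_le_one_of_one_le_of_nonpos hA
        have hNp : (0:ℝ) < (N:ℝ) := by exact_mod_cast hN
        rw [neg_nonpos]
        positivity
      calc (ε ^ 2 * (1 + 2 * (N : ℝ) * ε ^ (4 * N) * s) ^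
          (-(1 / (2 * (N : ℝ))))) ^ ((1 : ℝ) / 2)
          ≤ (ε ^ 2 * 1) ^ ((1 : ℝ) / 2) := by
            apply Real.rpow_le_rpow (by positivity) _ (by norm_num)
            exact mul_le_mul_of_nonneg_left h1 (by positivity)
        _ = ε := by
            rw [mul_one, ← Real.rpow_natCast ε 2, ← Real.rpow_mul hε.le]
            norm_num
    -- splitting W powers
    have hW32 : (ε ^ κ * (1 + ε ^ κ * s)⁻¹) ^ ((3 : ℝ) / 2) =
        (ε ^ κ) ^ ((3:ℝ)/2) * (1 + ε ^ κ * s) ^ (-(3/2 : ℝ)) := by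
      rw [Real.mul_rpow hεk.le (by positivity), Real.inv_rpow hB.le, ← Real.rpow_neg hB.le]
    have hW12 : (ε ^ κ * (1 + ε ^ κ * s)⁻¹) ^ ((1 : ℝ) / 2) =
        (ε ^ κ) ^ ((1:ℝ)/2) * (1 + ε ^ κ * s) ^ (-(1/2 : ℝ)) := by
      rw [Real.mul_rpow hεk.le (by positivity), Real.inv_rpow hB.le, ← Real.rpow_neg hB.le]
    have hBle : (1 + ε ^ κ * s) ^ (-(1/2 : ℝ)) ≤ 1 :=
      Real.rpow_le_one_of_one_le_of_nonpos hB1 (by norm_num)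
    rw [hh]
    have t1 : ε ^ (2 - δ) *
        (ε ^ 2 * (1 + 2 * (N : ℝ) * ε ^ (4 * N) * s) ^
            (-(1 / (2 * (N : ℝ))))) ^ ((1 : ℝ) / 2) *
        (ε ^ κ * (1 + ε ^ κ * s)⁻¹) ^ ((3 : ℝ) / 2) ≤
        C1 * (1 + ε ^ κ * s) ^ (-(3/2 : ℝ)) := by
      rw [hW32, hC1]
      calc ε ^ (2 - δ) * (ε ^ 2 * (1 + 2 * (N : ℝ) * ε ^ (4 * N) * s) ^
              (-(1 / (2 * (N : ℝ))))) ^ ((1 : ℝ) / 2) *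
            ((ε ^ κ) ^ ((3:ℝ)/2) * (1 + ε ^ κ * s) ^ (-(3/2 : ℝ)))
          ≤ ε ^ (2 - δ) * ε * ((ε ^ κ) ^ ((3:ℝ)/2) * (1 + ε ^ κ * s) ^ (-(3/2 : ℝ))) := by
            gcongr
        _ = ε ^ (2 - δ) * ε * (ε ^ κ) ^ ((3:ℝ)/2) * (1 + ε ^ κ * s) ^ (-(3/2 : ℝ)) := by ring
    have t2 : ε ^ 3 * (1 + s) ^ (-(9 / 8 : ℝ)) *
        (ε ^ 2 * (1 + 2 * (N : ℝ) * ε ^ (4 * N) * s) ^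
            (-(1 / (2 * (N : ℝ))))) ^ ((1 : ℝ) / 2) *
        (ε ^ κ * (1 + ε ^ κ * s)⁻¹) ^ ((1 : ℝ) / 2) ≤
        C2 * (1 + s) ^ (-(9/8 : ℝ)) := by
      rw [hW12, hC2]
      have hP : (0:ℝ) ≤ (1 + s) ^ (-(9 / 8 : ℝ)) := by positivity
      calc ε ^ 3 * (1 + s) ^ (-(9 / 8 : ℝ)) *
            (ε ^ 2 * (1 + 2 * (N : ℝ) * ε ^ (4 * N) * s) ^
                (-(1 / (2 * (N : ℝ))))) ^ ((1 : ℝ) / 2) *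
            ((ε ^ κ) ^ ((1:ℝ)/2) * (1 + ε ^ κ * s) ^ (-(1/2 : ℝ)))
          ≤ ε ^ 3 * (1 + s) ^ (-(9 / 8 : ℝ)) * ε * ((ε ^ κ) ^ ((1:ℝ)/2) * 1) := by
            gcongr
        _ = ε ^ 3 * ε * (ε ^ κ) ^ ((1:ℝ)/2) * (1 + s) ^ (-(9/8 : ℝ)) := by ring
    have t3 : ε ^ 7 * (1 + s) ^ (-(9 / 4 : ℝ)) ≤ C3 * (1 + s) ^ (-(9/4 : ℝ)) := le_of_eq rfl
    linarith
  -- integrate the bound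
  have hmono : (∫ s in Set.Ioi (0 : ℝ),
      (ε ^ (2 - δ) *
              (ε ^ 2 * (1 + 2 * (N : ℝ) * ε ^ (4 * N) * s) ^
                  (-(1 / (2 * (N : ℝ))))) ^ ((1 : ℝ) / 2) *
              (ε ^ κ * (1 + ε ^ κ * s)⁻¹) ^ ((3 : ℝ) / 2) +
            ε ^ 3 * (1 + s) ^ (-(9 / 8 : ℝ)) *
              (ε ^ 2 * (1 + 2 * (N : ℝ) * ε ^ (4 * N) * s) ^
                  (-(1 / (2 * (N : ℝ))))) ^ ((1 : ℝ) / 2) *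
              (ε ^ κ * (1 + ε ^ κ * s)⁻¹) ^ ((1 : ℝ) / 2) +
            ε ^ 7 * (1 + s) ^ (-(9 / 4 : ℝ)))) ≤ ∫ s in Set.Ioi (0:ℝ), h s := by
    apply integral_mono_of_nonneg
    · filter_upwards [ae_restrict_mem measurableSet_Ioi] with s hs
      have hs0 : (0:ℝ) < s := hs
      have hB : (0:ℝ) < 1 + ε ^ κ * s := by nlinarith
      have hApos : (0:ℝ) < 1 + 2 * (N : ℝ) * ε ^ (4 * N) * s := by
        nlinarith [mul_nonneg (mul_nonneg (mul_nonneg (by norm_num : (0:ℝ) ≤ 2)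
          (Nat.cast_nonneg N)) (pow_nonneg hε.le (4 * N))) hs0.le]
      have h1p : (0:ℝ) < 1 + s := by linarith
      positivity
    · exact hint
    · filter_upwards [ae_restrict_mem measurableSet_Ioi] with s hs
      exact hbound s hs
  refine hmono.trans ?_
  -- compute the integral of h
  have hval : ∫ s in Set.Ioi (0:ℝ), h s =
      C1 * (-1 / (ε ^ κ * (-(3/2 : ℝ) + 1))) + (C2 * (-1 / (1 * (-(9/8 : ℝ) + 1))) +
        C3 * (-1 / (1 * (-(9/4 : ℝ) + 1)))) := by
    rw [hh]
    calc ∫ s in Set.Ioi (0:ℝ), (C1 * (1 + ε ^ κ * s) ^ (-(3/2 : ℝ)) +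
          (C2 * (1 + s) ^ (-(9/8 : ℝ)) + C3 * (1 + s) ^ (-(9/4 : ℝ))))
        = (∫ s in Set.Ioi (0:ℝ), C1 * (1 + ε ^ κ * s) ^ (-(3/2 : ℝ))) +
          ∫ s in Set.Ioi (0:ℝ), (C2 * (1 + s) ^ (-(9/8 : ℝ)) + C3 * (1 + s) ^ (-(9/4 : ℝ))) :=
          integral_add (I1.1.const_mul C1) ((I2.1.const_mul C2).add (I3.1.const_mul C3))
      _ = (∫ s in Set.Ioi (0:ℝ), C1 * (1 + ε ^ κ * s) ^ (-(3/2 : ℝ))) +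
          ((∫ s in Set.Ioi (0:ℝ), C2 * (1 + s) ^ (-(9/8 : ℝ))) +
           ∫ s in Set.Ioi (0:ℝ), C3 * (1 + s) ^ (-(9/4 : ℝ))) := by
          rw [integral_add (I2.1.const_mul C2) (I3.1.const_mul C3)]
      _ = C1 * (-1 / (ε ^ κ * (-(3/2 : ℝ) + 1))) + (C2 * (-1 / (1 * (-(9/8 : ℝ) + 1))) +
          C3 * (-1 / (1 * (-(9/4 : ℝ) + 1)))) := by
          rw [integral_const_mul, integral_const_mul, integral_const_mul, I1.2, I2.2, I3.2]
          norm_num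
  rw [hval]
  have e1 : C1 * (-1 / (ε ^ κ * (-(3/2 : ℝ) + 1))) = 2 * ε ^ ((2 - δ) + 1 + κ * (3/2) + -κ) := by
    rw [hC1, Real.rpow_add hε, Real.rpow_add hε, Real.rpow_add hε, Real.rpow_one,
      Real.rpow_mul hε.le, Real.rpow_neg hε.le]
    field_simp
    ring
  have e2 : C2 * (-1 / (1 * (-(9/8 : ℝ) + 1))) = 8 * ε ^ ((3:ℝ) + 1 + κ * (1/2)) := by
    rw [hC2, ← Real.rpow_natCast ε 3, Real.rpow_add hε, Real.rpow_add hε, Real.rpow_one,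
      Real.rpow_mul hε.le]
    push_cast
    ring
  have e3 : C3 * (-1 / (1 * (-(9/4 : ℝ) + 1))) = (4/5) * ε ^ ((7:ℝ)) := by
    rw [hC3, ← Real.rpow_natCast ε 7]
    push_cast
    ring
  rw [e1, e2, e3]
  have target_pos : (0:ℝ) ≤ ε ^ (3 + κ / 2 - 2 * δ) := (Real.rpow_pos_of_pos hε _).le
  have b1 : ε ^ ((2 - δ) + 1 + κ * (3/2) + -κ) ≤ ε ^ (3 + κ / 2 - 2 * δ) :=
    Real.rpow_le_rpow_of_exponent_ge hε hε1 (by linarith)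
  have b2 : ε ^ ((3:ℝ) + 1 + κ * (1/2)) ≤ ε ^ (3 + κ / 2 - 2 * δ) :=
    Real.rpow_le_rpow_of_exponent_ge hε hε1 (by linarith)
  have b3 : ε ^ ((7:ℝ)) ≤ ε ^ (3 + κ / 2 - 2 * δ) :=
    Real.rpow_le_rpow_of_exponent_ge hε hε1 (by linarith)
  linarith
end
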